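/- arXiv:1312.2067 — 11 statements merged into one kernel-verified Lean document; each statement's English description precedes it below -/
import Mathlib

section
/- Let (X, Σ, μ) be a σ-finite measure space, u a measurable complex function on X, and φ : X → X a measurable non-singular transformation (μ∘φ⁻¹ ≪ μ). Let J be the Radon–Nikodym derivative of μ_u∘φ⁻¹ with respect to μ, where μ_u(E) = ∫_E |u|² dμ. Define w = 1 + J and dν = w dμ. Then for every measurable f : X → ℂ, one has ∫|f|² dμ + ∫|u·(f∘φ)|² dμ = ∫|f|² dν; in particular, f belongs to the domain D(uC_φ) = {f ∈ L²(μ) : u·(f∘φ) ∈ L²(μ)} if and only if f ∈ L²(ν). -/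
open MeasureTheory ENNReal

lemma memLp_two_iff {X : Type*} [MeasurableSpace X] (μ : Measure X)
    (f : X → ℂ) (hf : Measurable f) :
    MemLp f 2 μ ↔ (∫⁻ x, (‖f x‖₊ : ℝ≥0∞) ^ 2 ∂μ) < ∞ := by
  rw [MemLp, and_iff_right hf.aestronglyMeasurable,
    eLpNorm_lt_top_iff_lintegral_rpow_enorm_lt_top (by norm_num) (by norm_num)]
  simp only [ENNReal.toReal_ofNat]
  congr! 1
  refine lintegral_congr fun x => ?_
  rw [← ENNReal.rpow_natCast]
  norm_num [enorm_eq_nnnorm]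

/-- Lemma 2.1(a): with `w = 1 + J` and `dν = w dμ`, for every measurable `f` one has
`∫|f|² dμ + ∫|u·(f∘φ)|² dμ = ∫|f|² dν`, hence `f ∈ D(uC_φ)` iff `f ∈ L²(ν)`. -/
theorem stmt0
    {X : Type*} [MeasurableSpace X] (μ : Measure X) [SigmaFinite μ]
    (u : X → ℂ) (hu : Measurable u)
    (φ : X → X) (hφ : Measurable φ)
    (hns : (μ.map φ) ≪ μ)
    (J : X → ℝ≥0∞)
    (hJ : J = ((μ.withDensity fun x => (‖u x‖₊ : ℝ≥0∞) ^ 2).map φ).rnDeriv μ)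
    (ν : Measure X) (hν : ν = μ.withDensity fun x => 1 + J x)
    (f : X → ℂ) (hf : Measurable f) :
    (∫⁻ x, (‖f x‖₊ : ℝ≥0∞) ^ 2 ∂μ) +
      (∫⁻ x, (‖u x * f (φ x)‖₊ : ℝ≥0∞) ^ 2 ∂μ) =
      ∫⁻ x, (‖f x‖₊ : ℝ≥0∞) ^ 2 ∂ν ∧
    ((MemLp f 2 μ ∧ MemLp (fun x => u x * f (φ x)) 2 μ) ↔ MemLp f 2 ν) := by
  set μu : Measure X := μ.withDensity fun x => (‖u x‖₊ : ℝ≥0∞) ^ 2 with hμu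
  have hu2 : Measurable fun x => (‖u x‖₊ : ℝ≥0∞) ^ 2 := (hu.nnnorm.coe_nnreal_ennreal.pow_const 2)
  have hac : μu.map φ ≪ μ :=
    ((withDensity_absolutelyContinuous μ _).map hφ).trans hns
  have hJm : Measurable J := hJ ▸ Measure.measurable_rnDeriv _ _
  have key : μ.withDensity J = μu.map φ := by
    rw [hJ]; exact Measure.withDensity_rnDeriv_eq _ _ hac
  have hfm2 : Measurable fun x => (‖f x‖₊ : ℝ≥0∞) ^ 2 := hf.nnnorm.coe_nnreal_ennreal.pow_const 2
  have hJint : (∫⁻ x, J x * (‖f x‖₊ : ℝ≥0∞) ^ 2 ∂μ)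
      = ∫⁻ x, (‖u x * f (φ x)‖₊ : ℝ≥0∞) ^ 2 ∂μ := by
    have lwd : ∀ (g h : X → ℝ≥0∞), Measurable g → Measurable h →
        ∫⁻ x, h x ∂(μ.withDensity g) = ∫⁻ x, g x * h x ∂μ := fun g h hg hh => by
      rw [lintegral_withDensity_eq_lintegral_mul μ hg hh]; rfl
    rw [← lwd J _ hJm hfm2, key,
      lintegral_map hfm2 hφ, hμu,
      lwd _ (fun a => (‖f (φ a)‖₊ : ℝ≥0∞) ^ 2) hu2 ((hf.comp hφ).nnnorm.coe_nnreal_ennreal.pow_const 2)]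
    refine lintegral_congr fun x => ?_
    simp [mul_pow, ENNReal.coe_mul]
  have hmain : (∫⁻ x, (‖f x‖₊ : ℝ≥0∞) ^ 2 ∂μ) +
      (∫⁻ x, (‖u x * f (φ x)‖₊ : ℝ≥0∞) ^ 2 ∂μ) =
      ∫⁻ x, (‖f x‖₊ : ℝ≥0∞) ^ 2 ∂ν := by
    have lwd : ∀ (g h : X → ℝ≥0∞), Measurable g → Measurable h →
        ∫⁻ x, h x ∂(μ.withDensity g) = ∫⁻ x, g x * h x ∂μ := fun g h hg hh => by
      rw [lintegral_withDensity_eq_lintegral_mul μ hg hh]; rfl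
    rw [hν, lwd (fun x => 1 + J x) _ (measurable_const.add hJm) hfm2,
      ← hJint, ← lintegral_add_left hfm2]
    refine lintegral_congr fun x => ?_
    simp [add_mul]
  refine ⟨hmain, ?_⟩
  rw [memLp_two_iff μ f hf, memLp_two_iff ν f hf,
    memLp_two_iff μ (fun x => u x * f (φ x)) (hu.mul (hf.comp hφ)), ← hmain]
  constructor
  · rintro ⟨h1, h2⟩; exact ENNReal.add_lt_top.mpr ⟨h1, h2⟩
  · intro h; exact ENNReal.add_lt_top.mp h
end

section
/- With the setup above, the domain D(uC_φ) is dense in L²(μ) if and only if J < ∞ μ-almost everywhere, where J = d(μ_u∘φ⁻¹)/dμ. -/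
open MeasureTheory ENNReal Filter Topology

/-- Lemma 2.1(b): `D(uC_φ)` is dense in `L²(μ)` iff `J < ∞` μ-a.e. -/
theorem stmt1
    {X : Type*} [MeasurableSpace X] (μ : Measure X) [SigmaFinite μ]
    (u : X → ℂ) (hu : Measurable u)
    (φ : X → X) (hφ : Measurable φ)
    (hns : (μ.map φ) ≪ μ)
    (J : X → ℝ≥0∞)
    (hJ : J = ((μ.withDensity fun x => (‖u x‖₊ : ℝ≥0∞) ^ 2).map φ).rnDeriv μ) :
    Dense {f : Lp ℂ 2 μ |
        MemLp (fun x => u x * (f : X → ℂ) (φ x)) 2 μ} ↔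
      ∀ᵐ x ∂μ, J x < ∞ := by
  subst hJ
  set w : X → ℝ≥0∞ := fun x => (‖u x‖₊ : ℝ≥0∞) ^ 2 with hw
  have hwm : Measurable w := hu.nnnorm.coe_nnreal_ennreal.pow_const 2
  set ν : Measure X := (μ.withDensity w).map φ with hν
  have hJm : Measurable (ν.rnDeriv μ) := Measure.measurable_rnDeriv _ _
  have hac : ν ≪ μ := ((withDensity_absolutelyContinuous μ w).map hφ).trans hns
  have hνd : μ.withDensity (ν.rnDeriv μ) = ν := Measure.withDensity_rnDeriv_eq ν μ hac
  -- exponent conversion helper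
  have hpow : ∀ z : ℂ, (‖z‖₊ : ℝ≥0∞) ^ (2 : ℝ≥0∞).toReal = (‖z‖₊ : ℝ≥0∞) ^ 2 := by
    intro z
    rw [show ((2 : ℝ≥0∞).toReal) = ((2 : ℕ) : ℝ) by norm_num, ENNReal.rpow_natCast]
  -- key integral identity
  have key : ∀ (f : X → ℂ), StronglyMeasurable f →
      ∫⁻ x, ((‖u x * f (φ x)‖₊ : ℝ≥0∞)) ^ 2 ∂μ
        = ∫⁻ x, (‖f x‖₊ : ℝ≥0∞) ^ 2 * ν.rnDeriv μ x ∂μ := by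
    intro f hf
    have hfm : Measurable fun y => ((‖f y‖₊ : ℝ≥0∞)) ^ 2 :=
      hf.measurable.nnnorm.coe_nnreal_ennreal.pow_const 2
    calc ∫⁻ x, ((‖u x * f (φ x)‖₊ : ℝ≥0∞)) ^ 2 ∂μ
        = ∫⁻ x, (w * fun y => (‖f (φ y)‖₊ : ℝ≥0∞) ^ 2) x ∂μ :=
          lintegral_congr fun x => by simp [hw, nnnorm_mul, mul_pow]
      _ = ∫⁻ x, (‖f (φ x)‖₊ : ℝ≥0∞) ^ 2 ∂(μ.withDensity w) :=
          (lintegral_withDensity_eq_lintegral_mul μ hwm (hfm.comp hφ)).symm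
      _ = ∫⁻ y, (‖f y‖₊ : ℝ≥0∞) ^ 2 ∂ν := (lintegral_map hfm hφ).symm
      _ = ∫⁻ y, (‖f y‖₊ : ℝ≥0∞) ^ 2 ∂(μ.withDensity (ν.rnDeriv μ)) := by rw [hνd]
      _ = ∫⁻ x, (ν.rnDeriv μ * fun y => (‖f y‖₊ : ℝ≥0∞) ^ 2) x ∂μ :=
          lintegral_withDensity_eq_lintegral_mul μ hJm hfm
      _ = ∫⁻ x, (‖f x‖₊ : ℝ≥0∞) ^ 2 * ν.rnDeriv μ x ∂μ :=
          lintegral_congr fun x => mul_comm _ _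
  -- membership characterization
  have hmem : ∀ (f : X → ℂ), StronglyMeasurable f →
      (MemLp (fun x => u x * f (φ x)) 2 μ ↔
        ∫⁻ x, (‖f x‖₊ : ℝ≥0∞) ^ 2 * ν.rnDeriv μ x ∂μ < ∞) := by
    intro f hf
    have hsm : AEStronglyMeasurable (fun x => u x * f (φ x)) μ :=
      (hu.stronglyMeasurable.mul (hf.comp_measurable hφ)).aestronglyMeasurable
    have hrw : ∫⁻ x, (‖u x * f (φ x)‖₊ : ℝ≥0∞) ^ (2 : ℝ≥0∞).toReal ∂μ
        = ∫⁻ x, (‖f x‖₊ : ℝ≥0∞) ^ 2 * ν.rnDeriv μ x ∂μ := by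
      rw [← key f hf]
      exact lintegral_congr fun x => by rw [hpow]
    constructor
    · intro h
      have h2 := (eLpNorm_lt_top_iff_lintegral_rpow_enorm_lt_top
        (by norm_num) (by norm_num)).1 h.2
      simp only [enorm_eq_nnnorm] at h2; rwa [hrw] at h2
    · intro h
      exact ⟨hsm, (eLpNorm_lt_top_iff_lintegral_rpow_enorm_lt_top
        (by norm_num) (by norm_num)).2 (by simp only [enorm_eq_nnnorm]; rwa [hrw])⟩
  -- L² norm is finite
  have hL2 : ∀ f : Lp ℂ 2 μ, ∫⁻ x, (‖(f : X → ℂ) x‖₊ : ℝ≥0∞) ^ 2 ∂μ < ∞ := by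
    intro f
    have h := (eLpNorm_lt_top_iff_lintegral_rpow_enorm_lt_top
      (by norm_num) (by norm_num)).1 (Lp.eLpNorm_lt_top f)
    have heq : ∫⁻ x, (‖(f : X → ℂ) x‖₊ : ℝ≥0∞) ^ (2 : ℝ≥0∞).toReal ∂μ
        = ∫⁻ x, (‖(f : X → ℂ) x‖₊ : ℝ≥0∞) ^ 2 ∂μ :=
      lintegral_congr fun x => by rw [hpow]
    simp only [enorm_eq_nnnorm] at h; rwa [heq] at h
  constructor
  · -- dense → J < ∞ a.e.
    intro hD
    by_contra hne
    have hE : MeasurableSet {x | ν.rnDeriv μ x = ∞} := hJm (measurableSet_singleton ∞)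
    have hE0 : μ {x | ν.rnDeriv μ x = ∞} ≠ 0 := by
      intro h0
      apply hne
      have h' : ∀ᵐ x ∂μ, ν.rnDeriv μ x ≠ ∞ := by
        rw [ae_iff]; simpa using h0
      filter_upwards [h'] with x hx using lt_top_iff_ne_top.2 hx
    obtain ⟨F, hFm, hFE, hF0, hFfin⟩ :=
      Measure.exists_subset_measure_lt_top hE (pos_iff_ne_zero.2 hE0)
    set c : ℝ≥0∞ := μ F ^ (1 / (2 : ℝ)) with hc
    have hc0 : c ≠ 0 := by
      simp only [hc, ne_eq, ENNReal.rpow_eq_zero_iff, not_or, not_and_or]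
      exact ⟨Or.inl hF0.ne', Or.inl hFfin.ne⟩
    have hctop : c ≠ ∞ := by
      simp only [hc, ne_eq, ENNReal.rpow_eq_top_iff, not_or, not_and_or]
      exact ⟨Or.inl hF0.ne', Or.inl hFfin.ne⟩
    have hmem1 : MemLp (F.indicator fun _ => (1 : ℂ)) 2 μ :=
      memLp_indicator_const 2 hFm 1 (Or.inr hFfin.ne)
    set hL : Lp ℂ 2 μ := hmem1.toLp _ with hLdef
    have hclos : hL ∈ closure {f : Lp ℂ 2 μ |
        MemLp (fun x => u x * (f : X → ℂ) (φ x)) 2 μ} := hD hL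
    rw [Metric.mem_closure_iff] at hclos
    obtain ⟨f, hfD, hdist⟩ := hclos c.toReal (ENNReal.toReal_pos hc0 hctop)
    have hfin := (hmem _ (Lp.stronglyMeasurable f)).1 hfD
    have hmeas2 : Measurable fun x =>
        (‖(f : X → ℂ) x‖₊ : ℝ≥0∞) ^ 2 * ν.rnDeriv μ x :=
      ((Lp.stronglyMeasurable f).measurable.nnnorm.coe_nnreal_ennreal.pow_const 2).mul hJm
    have hae := ae_lt_top hmeas2 hfin.ne
    have hzero : ∀ᵐ x ∂μ, x ∈ F → (f : X → ℂ) x = 0 := by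
      filter_upwards [hae] with x hx hxF
      by_contra hfx
      have hxE : ν.rnDeriv μ x = ∞ := hFE hxF
      have hn0 : (‖(f : X → ℂ) x‖₊ : ℝ≥0∞) ^ 2 ≠ 0 := by
        simpa using hfx
      rw [hxE, ENNReal.mul_top hn0] at hx
      exact absurd hx (by simp)
    have hLcoe : (⇑hL : X → ℂ) =ᵐ[μ] F.indicator fun _ => (1 : ℂ) :=
      hmem1.coeFn_toLp
    have hsub : (⇑(hL - f) : X → ℂ) =ᵐ[μ]
        fun x => F.indicator (fun _ => (1 : ℂ)) x - (f : X → ℂ) x := by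
      filter_upwards [Lp.coeFn_sub hL f, hLcoe] with x h1 h2
      rw [h1, Pi.sub_apply, h2]
    have hres : (⇑(hL - f) : X → ℂ) =ᵐ[μ.restrict F] fun _ => (1 : ℂ) := by
      filter_upwards [ae_restrict_of_ae hsub,
        (ae_restrict_iff' hFm).2 hzero, self_mem_ae_restrict hFm] with x h1 h2 hxF
      rw [h1, h2, Set.indicator_of_mem hxF]
      simp
    have hge : c ≤ eLpNorm (⇑(hL - f)) 2 μ := by
      have hr0 : μ.restrict F ≠ 0 := by
        simp only [ne_eq, Measure.restrict_eq_zero]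
        exact hF0.ne'
      calc c = eLpNorm (fun _ => (1 : ℂ)) 2 (μ.restrict F) := by
            rw [eLpNorm_const _ (by norm_num) hr0, Measure.restrict_apply_univ]
            simp [hc]
        _ = eLpNorm (⇑(hL - f)) 2 (μ.restrict F) := (eLpNorm_congr_ae hres).symm
        _ ≤ eLpNorm (⇑(hL - f)) 2 μ := eLpNorm_mono_measure _ Measure.restrict_le_self
    have hle : c.toReal ≤ dist hL f := by
      rw [Lp.dist_def, ← eLpNorm_congr_ae (Lp.coeFn_sub hL f)]
      exact ENNReal.toReal_mono (Lp.eLpNorm_ne_top _) hge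
    linarith
  · -- J < ∞ a.e. → dense
    intro hfin f
    set S : ℕ → Set X := fun n => {x | ν.rnDeriv μ x ≤ n} with hS
    have hSm : ∀ n, MeasurableSet (S n) := fun n => hJm measurableSet_Iic
    have hg : ∀ n, MemLp ((S n).indicator (⇑f)) 2 μ :=
      fun n => (Lp.memLp f).indicator (hSm n)
    set fn : ℕ → Lp ℂ 2 μ := fun n => ((hg n).toLp _) with hfn
    have hIten : Tendsto (fun n => ∫⁻ x,
        ((S n)ᶜ).indicator (fun x => (‖(f : X → ℂ) x‖₊ : ℝ≥0∞) ^ 2) x ∂μ)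
        atTop (𝓝 0) := by
      have h0 : (0 : ℝ≥0∞) = ∫⁻ _, (0 : ℝ≥0∞) ∂μ := lintegral_zero.symm
      rw [h0]
      refine tendsto_lintegral_of_dominated_convergence
        (fun x => (‖(f : X → ℂ) x‖₊ : ℝ≥0∞) ^ 2)
        (fun n => ((Lp.stronglyMeasurable f).measurable.nnnorm.coe_nnreal_ennreal.pow_const 2).indicator
          (hSm n).compl)
        (fun n => Eventually.of_forall fun x => Set.indicator_le_self _ _ x)
        (hL2 f).ne ?_
      filter_upwards [hfin] with x hx
      obtain ⟨N, hN⟩ := ENNReal.exists_nat_gt hx.ne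
      refine tendsto_atTop_of_eventually_const (i₀ := N) fun n hn => ?_
      have hxS : x ∈ S n := by
        simp only [hS, Set.mem_setOf_eq]
        exact hN.le.trans (by exact_mod_cast Nat.cast_le.2 hn)
      exact Set.indicator_of_notMem (by simpa using hxS) _
    have hdist_eq : ∀ n, dist (fn n) f =
        ((∫⁻ x, ((S n)ᶜ).indicator
          (fun x => (‖(f : X → ℂ) x‖₊ : ℝ≥0∞) ^ 2) x ∂μ) ^ (1 / (2 : ℝ))).toReal := by
      intro n
      rw [Lp.dist_def]
      congr 1
      have h1 : (⇑(fn n) - ⇑f : X → ℂ) =ᵐ[μ]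
          -(((S n)ᶜ).indicator (⇑f)) := by
        filter_upwards [(hg n).coeFn_toLp] with x hx
        by_cases hxS : x ∈ S n
        · simp [hfn, Pi.sub_apply, Pi.neg_apply, hx, Set.indicator_of_mem hxS,
            Set.indicator_of_notMem (Set.notMem_compl_iff.2 hxS)]
        · simp [hfn, Pi.sub_apply, Pi.neg_apply, hx, Set.indicator_of_notMem hxS,
            Set.indicator_of_mem (Set.mem_compl hxS)]
      rw [eLpNorm_congr_ae h1, eLpNorm_neg,
        eLpNorm_eq_lintegral_rpow_enorm_toReal (by norm_num) (by norm_num)]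
      congr 1
      · refine lintegral_congr fun x => ?_
        rw [enorm_eq_nnnorm, hpow]
        by_cases hxS : x ∈ (S n)ᶜ
        · simp [Set.indicator_of_mem hxS]
        · simp [Set.indicator_of_notMem hxS]
    refine mem_closure_of_tendsto (f := fn) (b := atTop) ?_ (Eventually.of_forall fun n => ?_)
    · rw [tendsto_iff_dist_tendsto_zero]
      have h2 : Tendsto (fun n => (∫⁻ x, ((S n)ᶜ).indicator
          (fun x => (‖(f : X → ℂ) x‖₊ : ℝ≥0∞) ^ 2) x ∂μ) ^ (1 / (2 : ℝ)))
          atTop (𝓝 0) := by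
        have hc := (ENNReal.continuous_rpow_const (y := 1 / (2 : ℝ))).tendsto 0
        have := hc.comp hIten
        simpa [Function.comp_def, ENNReal.zero_rpow_of_pos (by norm_num : (0:ℝ) < 1 / 2)] using this
      have h3 := (ENNReal.tendsto_toReal (a := 0) (by simp)).comp h2
      have h4 : (fun n => dist (fn n) f) = fun n =>
          ((∫⁻ x, ((S n)ᶜ).indicator
            (fun x => (‖(f : X → ℂ) x‖₊ : ℝ≥0∞) ^ 2) x ∂μ) ^ (1 / (2 : ℝ))).toReal :=
        funext hdist_eq
      rw [h4]
      simpa [Function.comp_def] using h3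
    · show MemLp (fun x => u x * (fn n : X → ℂ) (φ x)) 2 μ
      have hgsm : StronglyMeasurable ((S n).indicator (⇑f)) :=
        (Lp.stronglyMeasurable f).indicator (hSm n)
      have hcoe : ⇑(fn n) =ᵐ[μ] (S n).indicator (⇑f) := (hg n).coeFn_toLp
      have hcomp : (fun x => (fn n : X → ℂ) (φ x)) =ᵐ[μ]
          fun x => (S n).indicator (⇑f) (φ x) :=
        ae_of_ae_map hφ.aemeasurable (hcoe.filter_mono hns.ae_le)
      have hb : ∀ x, (‖(S n).indicator (⇑f) x‖₊ : ℝ≥0∞) ^ 2 * ν.rnDeriv μ x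
          ≤ (n : ℝ≥0∞) * (‖(f : X → ℂ) x‖₊ : ℝ≥0∞) ^ 2 := by
        intro x
        by_cases hx : x ∈ S n
        · rw [Set.indicator_of_mem hx]
          calc (‖(f : X → ℂ) x‖₊ : ℝ≥0∞) ^ 2 * ν.rnDeriv μ x
              ≤ (‖(f : X → ℂ) x‖₊ : ℝ≥0∞) ^ 2 * n := mul_le_mul_right hx _
            _ = (n : ℝ≥0∞) * (‖(f : X → ℂ) x‖₊ : ℝ≥0∞) ^ 2 := mul_comm _ _
        · rw [Set.indicator_of_notMem hx]
          simp
      have hM : MemLp (fun x => u x * (S n).indicator (⇑f) (φ x)) 2 μ := by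
        refine (hmem _ hgsm).2 (lt_of_le_of_lt (lintegral_mono hb) ?_)
        rw [lintegral_const_mul' _ _ (by simp)]
        exact ENNReal.mul_lt_top (by simp) (hL2 f)
      exact hM.ae_eq (by filter_upwards [hcomp] with x hx; rw [hx])
end

section
/- Let (X, Σ, μ) be σ-finite, u measurable, φ measurable non-singular, and for n ≥ 0 let J_n be defined by J_0 = 1 and J_n = d(ν_{n-1}∘φ⁻¹)/dμ where dν_{n-1} = J_{n-1}|u|² dμ. Then for every n ≥ 1 and every f with u_{φ,n}·(f∘φⁿ) ∈ L²(μ), where u_{φ,n} = u·(u∘φ)·(u∘φ²)⋯(u∘φ^{n-1}), one has ∫ |u_{φ,n}|²·|f∘φⁿ|² dμ = ∫ J_n |f|² dμ. -/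
open MeasureTheory ENNReal Finset

/-- `‖(uC_φ)ⁿ f‖² = ∫ Jₙ |f|² dμ` where `J₀ = 1` and
`Jₙ = d((J_{n-1}|u|² μ) ∘ φ⁻¹)/dμ`, and `u_{φ,n} = ∏_{i<n} u ∘ φ^i`. -/
theorem stmt3
    {X : Type*} [MeasurableSpace X] (μ : Measure X) [SigmaFinite μ]
    (u : X → ℂ) (hu : Measurable u)
    (φ : X → X) (hφ : Measurable φ)
    (hns : (μ.map φ) ≪ μ)
    (J : ℕ → X → ℝ≥0∞)
    (hJ0 : J 0 = fun _ => 1)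
    (hJ : ∀ n : ℕ, J (n + 1) =
      ((μ.withDensity fun x => J n x * (‖u x‖₊ : ℝ≥0∞) ^ 2).map φ).rnDeriv μ)
    (n : ℕ) (hn : 1 ≤ n)
    (f : X → ℂ) (hf : Measurable f)
    (hdom : MemLp (fun x => (∏ i ∈ range n, u (φ^[i] x)) * f (φ^[n] x)) 2 μ) :
    ∫⁻ x, (‖(∏ i ∈ range n, u (φ^[i] x)) * f (φ^[n] x)‖₊ : ℝ≥0∞) ^ 2 ∂μ =
      ∫⁻ x, J n x * (‖f x‖₊ : ℝ≥0∞) ^ 2 ∂μ := by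
  have hJmeas : ∀ m, Measurable (J m) := by
    intro m
    cases m with
    | zero => rw [hJ0]; exact measurable_const
    | succ m => rw [hJ m]; exact Measure.measurable_rnDeriv _ _
  have key : ∀ m : ℕ, ∀ g : X → ℝ≥0∞, Measurable g →
      ∫⁻ x, J m x * g x ∂μ =
        ∫⁻ x, (∏ i ∈ range m, ((‖u (φ^[i] x)‖₊ : ℝ≥0∞)) ^ 2) * g (φ^[m] x) ∂μ := by
    intro m
    induction m with
    | zero => intro g hg; simp [hJ0]
    | succ m ih =>
      intro g hg
      have hgφ : Measurable fun x => g (φ x) := hg.comp hφ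
      have step : ∫⁻ x, J (m + 1) x * g x ∂μ =
          ∫⁻ x, J m x * ((‖u x‖₊ : ℝ≥0∞) ^ 2 * g (φ x)) ∂μ := by
        rw [hJ m]
        have hac : ((μ.withDensity fun x => J m x * (‖u x‖₊ : ℝ≥0∞) ^ 2).map φ) ≪ μ :=
          ((withDensity_absolutelyContinuous μ _).map hφ).trans hns
        rw [lintegral_rnDeriv_mul hac hg.aemeasurable,
          lintegral_map hg hφ,
          lintegral_withDensity_eq_lintegral_mul μ (f := fun x => J m x * (‖u x‖₊ : ℝ≥0∞) ^ 2)
            ((hJmeas m).mul ((hu.nnnorm.coe_nnreal_ennreal).pow measurable_const)) hgφ]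
        exact lintegral_congr fun x => by simp only [Pi.mul_apply]; ring
      have hg' : Measurable fun x => (‖u x‖₊ : ℝ≥0∞) ^ 2 * g (φ x) :=
        (hu.nnnorm.coe_nnreal_ennreal.pow measurable_const).mul hgφ
      rw [step, ih _ hg']
      refine lintegral_congr fun x => ?_
      rw [prod_range_succ, Function.iterate_succ_apply']
      ring
  have hg : Measurable fun x => (‖f x‖₊ : ℝ≥0∞) ^ 2 :=
    hf.nnnorm.coe_nnreal_ennreal.pow measurable_const
  rw [key n _ hg]
  refine lintegral_congr fun x => ?_
  push_cast [nnnorm_mul, nnnorm_prod, mul_pow, prod_pow]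
  ring
end

section
/- Assume D(uC_φ) is dense in L²(μ) and all J_n are finite a.e. Then uC_φ maps its domain into itself (uC_φ(D(uC_φ)) ⊆ D(uC_φ)) if and only if there exists c > 0 such that J_2 ≤ c(1 + J_1) μ-almost everywhere. -/
open MeasureTheory ENNReal NNReal

private lemma lint_push {X : Type*} [MeasurableSpace X] (μ : Measure X) [SigmaFinite μ]
    {φ : X → X} (hφ : Measurable φ) (ν : Measure X) [SFinite ν]
    (hac : ν.map φ ≪ μ) {h : X → ℝ≥0∞} (hh : Measurable h) :
    ∫⁻ x, (ν.map φ).rnDeriv μ x * h x ∂μ = ∫⁻ x, h (φ x) ∂ν := by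
  have e1 : μ.withDensity ((ν.map φ).rnDeriv μ) = ν.map φ :=
    Measure.withDensity_rnDeriv_eq _ _ hac
  calc ∫⁻ x, (ν.map φ).rnDeriv μ x * h x ∂μ
      = ∫⁻ x, h x ∂(μ.withDensity ((ν.map φ).rnDeriv μ)) :=
        (lintegral_withDensity_eq_lintegral_mul μ (Measure.measurable_rnDeriv _ _) hh).symm
    _ = ∫⁻ x, h x ∂(ν.map φ) := by rw [e1]
    _ = ∫⁻ x, h (φ x) ∂ν := lintegral_map hh hφ

private lemma mem2_iff {X : Type*} [MeasurableSpace X] {μ : Measure X} {f : X → ℂ}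
    (hf : AEStronglyMeasurable f μ) :
    MemLp f 2 μ ↔ ∫⁻ x, (‖f x‖₊ : ℝ≥0∞) ^ 2 ∂μ < ⊤ := by
  have e : ∫⁻ x, ‖f x‖ₑ ^ ((2:ℝ≥0∞).toReal) ∂μ
      = ∫⁻ x, (‖f x‖₊ : ℝ≥0∞) ^ 2 ∂μ := by
    refine lintegral_congr fun x => ?_
    rw [ENNReal.toReal_ofNat, ← ENNReal.rpow_natCast, enorm_eq_nnnorm]
    norm_num
  constructor
  · rintro ⟨-, h⟩
    rw [eLpNorm_eq_lintegral_rpow_enorm_toReal (by norm_num) (by norm_num),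
      ENNReal.rpow_lt_top_iff_of_pos (by norm_num), e] at h
    exact h
  · intro h
    refine ⟨hf, ?_⟩
    rw [eLpNorm_eq_lintegral_rpow_enorm_toReal (by norm_num) (by norm_num),
      ENNReal.rpow_lt_top_iff_of_pos (by norm_num), e]
    exact h

/-- Proposition 2.2: if `D(uC_φ)` is dense in `L²(μ)` then `uC_φ` maps its domain
into itself iff there is `c > 0` with `J₂ ≤ c(1 + J₁)` a.e. -/
theorem stmt4
    {X : Type*} [MeasurableSpace X] (μ : Measure X) [SigmaFinite μ]
    (u : X → ℂ) (hu : Measurable u)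
    (φ : X → X) (hφ : Measurable φ)
    (hns : (μ.map φ) ≪ μ)
    (J : ℕ → X → ℝ≥0∞)
    (hJ0 : J 0 = fun _ => 1)
    (hJ : ∀ n : ℕ, J (n + 1) =
      ((μ.withDensity fun x => J n x * (‖u x‖₊ : ℝ≥0∞) ^ 2).map φ).rnDeriv μ)
    (hfin : ∀ n, ∀ᵐ x ∂μ, J n x < ∞)
    (D : Set (X → ℂ))
    (hD : D = {f | MemLp f 2 μ ∧ MemLp (fun x => u x * f (φ x)) 2 μ})
    (hdense : Dense {f : Lp ℂ 2 μ |
        MemLp (fun x => u x * (f : X → ℂ) (φ x)) 2 μ}) :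
    (∀ f ∈ D, (fun x => u x * f (φ x)) ∈ D) ↔
      ∃ c : ℝ≥0, 0 < c ∧ ∀ᵐ x ∂μ, J 2 x ≤ c * (1 + J 1 x) := by
  have hJm : ∀ n, Measurable (J n) := by
    intro n
    cases n with
    | zero => rw [hJ0]; exact measurable_const
    | succ n => rw [hJ n]; exact Measure.measurable_rnDeriv _ _
  set w : ℕ → X → ℝ≥0∞ := fun n x => J n x * (‖u x‖₊ : ℝ≥0∞) ^ 2 with hw
  have hwm : ∀ n, Measurable (w n) := fun n =>
    (hJm n).mul ((hu.nnnorm.coe_nnreal_ennreal).pow_const 2)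
  have hac : ∀ n : ℕ, ((μ.withDensity (w n)).map φ) ≪ μ := by
    intro n
    refine Measure.AbsolutelyContinuous.mk fun s hs h0 => ?_
    rw [Measure.map_apply hφ hs]
    have h1 : μ (φ ⁻¹' s) = 0 := by
      have h2 := hns h0
      rwa [Measure.map_apply hφ hs] at h2
    exact (withDensity_absolutelyContinuous μ (w n)) h1
  have jlem : ∀ (n : ℕ) (h : X → ℝ≥0∞), Measurable h →
      ∫⁻ x, J (n+1) x * h x ∂μ = ∫⁻ x, w n x * h (φ x) ∂μ := by
    intro n h hh
    rw [hJ n]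
    rw [lint_push μ hφ _ (hac n) hh]
    exact lintegral_withDensity_eq_lintegral_mul μ (hwm n) (hh.comp hφ)
  -- I1
  have I1 : ∀ (f : X → ℂ), Measurable f →
      ∫⁻ x, (‖u x * f (φ x)‖₊ : ℝ≥0∞) ^ 2 ∂μ
        = ∫⁻ x, J 1 x * (‖f x‖₊ : ℝ≥0∞) ^ 2 ∂μ := by
    intro f hf
    rw [jlem 0 (fun x => (‖f x‖₊ : ℝ≥0∞) ^ 2)
      ((hf.nnnorm.coe_nnreal_ennreal).pow_const 2)]
    refine lintegral_congr fun x => ?_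
    simp only [hw, hJ0, one_mul, nnnorm_mul, ENNReal.coe_mul, mul_pow]
  -- I2 : relates J2 to J1 applied to u * f∘φ
  have I2 : ∀ (f : X → ℂ), Measurable f →
      ∫⁻ x, J 2 x * (‖f x‖₊ : ℝ≥0∞) ^ 2 ∂μ
        = ∫⁻ x, J 1 x * (‖u x * f (φ x)‖₊ : ℝ≥0∞) ^ 2 ∂μ := by
    intro f hf
    rw [show (2:ℕ) = 1 + 1 from rfl,
      jlem 1 (fun x => (‖f x‖₊ : ℝ≥0∞) ^ 2)
      ((hf.nnnorm.coe_nnreal_ennreal).pow_const 2)]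
    refine lintegral_congr fun x => ?_
    simp only [hw, nnnorm_mul, ENNReal.coe_mul, mul_pow, mul_assoc]
  rw [hD]
  constructor
  · intro hmap
    by_contra hnc
    push_neg at hnc
    have hfin1set : μ {x | ¬ J 1 x < ⊤} = 0 := ae_iff.mp (hfin 1)
    set A : ℕ → Set X := fun n => {x | (16:ℝ≥0∞) ^ n * (1 + J 1 x) < J 2 x} with hAdef
    have hA : ∀ n : ℕ, μ (A n) ≠ 0 := by
      intro n
      have h := hnc ((16:ℝ≥0) ^ n) (by positivity)
      rw [MeasureTheory.frequently_ae_iff] at h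
      have hset : {x | ((((16:ℝ≥0) ^ n : ℝ≥0)) : ℝ≥0∞) * (1 + J 1 x) < J 2 x} = A n := by
        ext x
        simp only [hAdef, Set.mem_setOf_eq, not_le, ENNReal.coe_pow]
        norm_num
      rwa [hset] at h
    have hAmeas : ∀ n, MeasurableSet (A n) :=
      fun n => measurableSet_lt ((measurable_const.add (hJm 1)).const_mul _) (hJm 2)
    -- choose good subsets
    have hex : ∀ n : ℕ, ∃ k : ℕ,
        μ (A n ∩ (spanningSets μ k ∩ {x | J 1 x ≤ (k : ℝ≥0∞)})) ≠ 0 := by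
      intro n
      by_contra hall
      push_neg at hall
      have hcup : μ (⋃ k, A n ∩ (spanningSets μ k ∩ {x | J 1 x ≤ (k : ℝ≥0∞)})) = 0 :=
        measure_iUnion_null hall
      have hsub : A n ⊆
          (⋃ k, A n ∩ (spanningSets μ k ∩ {x | J 1 x ≤ (k : ℝ≥0∞)})) ∪
            {x | ¬ J 1 x < ⊤} := by
        intro x hx
        by_cases hfx : J 1 x < ⊤
        · left
          have hxu : x ∈ ⋃ k, spanningSets μ k := by
            rw [iUnion_spanningSets]; trivial
          obtain ⟨k1, hk1⟩ := Set.mem_iUnion.mp hxu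
          obtain ⟨k2, hk2⟩ := ENNReal.exists_nat_gt hfx.ne
          refine Set.mem_iUnion.mpr ⟨max k1 k2, hx,
            monotone_spanningSets μ (le_max_left _ _) hk1, ?_⟩
          exact le_trans hk2.le (by exact_mod_cast Nat.cast_le.mpr (le_max_right k1 k2))
        · right; exact hfx
      exact hA n (measure_mono_null hsub (measure_union_null hcup hfin1set))
    choose k hk using hex
    set B : ℕ → Set X := fun n =>
      A n ∩ (spanningSets μ (k n) ∩ {x | J 1 x ≤ ((k n : ℕ) : ℝ≥0∞)}) with hBdef
    have hBmeas : ∀ n, MeasurableSet (B n) := fun n =>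
      (hAmeas n).inter ((measurableSet_spanningSets μ (k n)).inter
        (measurableSet_le (hJm 1) measurable_const))
    have hB0 : ∀ n, μ (B n) ≠ 0 := hk
    have hBfin : ∀ n, μ (B n) < ⊤ := fun n =>
      lt_of_le_of_lt (measure_mono fun x hx => hx.2.1) (measure_spanningSets_lt_top μ (k n))
    -- the weights t n
    set t : ℕ → ℝ≥0∞ := fun n => ∫⁻ x in B n, (1 + J 1 x) ∂μ with htdef
    have htlow : ∀ n, μ (B n) ≤ t n := by
      intro n
      rw [← setLIntegral_one]
      exact setLIntegral_mono' (hBmeas n) fun x _ => le_self_add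
    have ht0 : ∀ n, t n ≠ 0 := fun n h => hB0 n (le_antisymm (h ▸ htlow n) zero_le)
    have httop : ∀ n, t n ≠ ⊤ := by
      intro n
      have h1 : t n ≤ ∫⁻ _x in B n, (1 + (k n : ℝ≥0∞)) ∂μ :=
        setLIntegral_mono' (hBmeas n) fun x hx => add_le_add_right hx.2.2 1
      rw [setLIntegral_const] at h1
      exact (lt_of_le_of_lt h1 (ENNReal.mul_lt_top (by simp) (hBfin n))).ne
    have hJ2B : ∀ n, (16:ℝ≥0∞) ^ n * t n ≤ ∫⁻ x in B n, J 2 x ∂μ := by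
      intro n
      have e : (16:ℝ≥0∞) ^ n * t n = ∫⁻ x in B n, (16:ℝ≥0∞) ^ n * (1 + J 1 x) ∂μ :=
        (lintegral_const_mul _ (measurable_const.add (hJm 1))).symm
      rw [e]
      exact setLIntegral_mono' (hBmeas n) fun x hx => (hx.1).le
    -- geometric weights
    set r : ℕ → ℝ≥0∞ := fun n => (t n) ^ ((1:ℝ)/2) with hrdef
    have hr0 : ∀ n, r n ≠ 0 := by
      intro n
      simp only [hrdef, ne_eq, ENNReal.rpow_eq_zero_iff, not_or, not_and, not_lt]
      exact ⟨fun h => absurd h (ht0 n), fun h => absurd h (httop n)⟩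
    have hrtop : ∀ n, r n ≠ ⊤ := by
      intro n
      simp only [hrdef, ne_eq, ENNReal.rpow_eq_top_iff, not_or, not_and, not_lt]
      exact ⟨fun h => absurd h (ht0 n), fun h => absurd h (httop n)⟩
    have hrr : ∀ n, r n * r n = t n := by
      intro n
      rw [hrdef]
      rw [← ENNReal.rpow_add _ _ (ht0 n) (httop n)]
      norm_num
    set p : ℕ → ℝ≥0∞ := fun n => (2:ℝ≥0∞)⁻¹ ^ n with hpdef
    have hpsum : ∑' n, p n = 2 := by
      rw [hpdef]
      rw [ENNReal.tsum_geometric, ENNReal.one_sub_inv_two, inv_inv]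
    set a : ℕ → ℝ≥0∞ := fun n => p n / r n with hadef
    have har : ∀ n, a n * r n = p n := fun n => ENNReal.div_mul_cancel (hr0 n) (hrtop n)
    have hdiv : ∀ (pa pb : ℝ≥0∞) (n : ℕ), (pa / r n) * (pb / r n) = (pa / t n) * pb := by
      intro pa pb n
      rw [div_eq_mul_inv, div_eq_mul_inv, div_eq_mul_inv, ← hrr n,
        ENNReal.mul_inv (Or.inl (hr0 n)) (Or.inl (hrtop n))]
      ring
    set i : ℕ → X → ℝ≥0∞ := fun n => (B n).indicator (fun _ => a n) with hidef
    set q : ℕ → X → ℝ≥0∞ := fun n => (B n).indicator (fun _ => p n / t n) with hqdef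
    have him : ∀ n, Measurable (i n) := fun n => measurable_const.indicator (hBmeas n)
    have hqm : ∀ n, Measurable (q n) := fun n => measurable_const.indicator (hBmeas n)
    set g : X → ℝ≥0∞ := fun x => ∑' n, i n x with hgdef
    set T : X → ℝ≥0∞ := fun x => ∑' n, q n x with hTdef
    have hgm : Measurable g := Measurable.ennreal_tsum him
    have hTm : Measurable T := Measurable.ennreal_tsum hqm
    -- termwise bound
    have hterm : ∀ (n m : ℕ) (x : X), i n x * i m x ≤ q n x * p m + p n * q m x := by
      intro n m x
      by_cases hxn : x ∈ B n
      · by_cases hxm : x ∈ B m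
        · simp only [hidef, hqdef, Set.indicator_of_mem hxn, Set.indicator_of_mem hxm]
          rcases le_total (r n) (r m) with h | h
          · refine le_trans ?_ le_self_add
            calc a n * a m = (p n / r n) * (p m / r m) := rfl
              _ ≤ (p n / r n) * (p m / r n) :=
                  mul_le_mul_right (ENNReal.div_le_div_left h _) _
              _ = (p n / t n) * p m := hdiv _ _ n
          · refine le_trans ?_ le_add_self
            calc a n * a m = (p n / r n) * (p m / r m) := rfl
              _ ≤ (p n / r m) * (p m / r m) :=
                  mul_le_mul_left (ENNReal.div_le_div_left h _) _
              _ = (p m / r m) * (p n / r m) := mul_comm _ _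
              _ = (p m / t m) * p n := hdiv _ _ m
              _ = p n * (p m / t m) := mul_comm _ _
        · simp [hidef, hqdef, Set.indicator_of_notMem hxm]
      · simp [hidef, hqdef, Set.indicator_of_notMem hxn]
    -- pointwise square bound
    have hg2 : ∀ x, g x * g x ≤ 4 * T x := by
      intro x
      have e1 : g x * g x = ∑' (n : ℕ), ∑' (m : ℕ), i n x * i m x := by
        calc g x * g x = ∑' (n : ℕ), i n x * g x := ENNReal.tsum_mul_right.symm
          _ = ∑' (n : ℕ), ∑' (m : ℕ), i n x * i m x :=
              tsum_congr fun n => ENNReal.tsum_mul_left.symm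
      calc g x * g x = ∑' (n : ℕ), ∑' (m : ℕ), i n x * i m x := e1
        _ ≤ ∑' (n : ℕ), ∑' (m : ℕ), (q n x * p m + p n * q m x) :=
            ENNReal.tsum_le_tsum fun n => ENNReal.tsum_le_tsum fun m => hterm n m x
        _ = ∑' (n : ℕ), (q n x * 2 + p n * T x) := by
            refine tsum_congr fun n => ?_
            rw [ENNReal.tsum_add, ENNReal.tsum_mul_left, ENNReal.tsum_mul_left, hpsum]
        _ = (∑' (n : ℕ), q n x * 2) + ∑' (n : ℕ), p n * T x := ENNReal.tsum_add
        _ = T x * 2 + 2 * T x := by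
            rw [ENNReal.tsum_mul_right, ENNReal.tsum_mul_right, hpsum]
        _ = 4 * T x := by ring
    -- weighted integral of T
    have hTint : ∀ wgt : X → ℝ≥0∞, Measurable wgt →
        ∫⁻ x, wgt x * T x ∂μ = ∑' (n : ℕ), (p n / t n) * ∫⁻ x in B n, wgt x ∂μ := by
      intro wgt hwgt
      have e1 : ∫⁻ x, wgt x * T x ∂μ = ∑' (n : ℕ), ∫⁻ x, wgt x * q n x ∂μ := by
        rw [← lintegral_tsum (f := fun n x => wgt x * q n x) fun n => (hwgt.mul (hqm n)).aemeasurable]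
        exact lintegral_congr fun x => ENNReal.tsum_mul_left.symm
      rw [e1]
      refine tsum_congr fun n => ?_
      have e2 : ∀ x, wgt x * q n x = (B n).indicator (fun y => (p n / t n) * wgt y) x := by
        intro x
        by_cases hx : x ∈ B n
        · simp only [hqdef, Set.indicator_of_mem hx, mul_comm]
        · simp [hqdef, Set.indicator_of_notMem hx]
      rw [lintegral_congr e2, lintegral_indicator (hBmeas n) _,
        lintegral_const_mul _ hwgt]
    have hTmain : ∫⁻ x, (1 + J 1 x) * T x ∂μ = 2 := by
      rw [hTint (fun x => 1 + J 1 x) (measurable_const.add (hJm 1))]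
      have e : ∀ n : ℕ, (p n / t n) * (∫⁻ x in B n, (1 + J 1 x) ∂μ) = p n := by
        intro n
        have : (∫⁻ x in B n, (1 + J 1 x) ∂μ) = t n := rfl
        rw [this, ENNReal.div_mul_cancel (ht0 n) (httop n)]
      rw [tsum_congr e, hpsum]
    -- upper bounds
    have hupp : ∫⁻ x, (1 + J 1 x) * (g x * g x) ∂μ ≤ 8 := by
      calc ∫⁻ x, (1 + J 1 x) * (g x * g x) ∂μ
          ≤ ∫⁻ x, (1 + J 1 x) * (4 * T x) ∂μ :=
            lintegral_mono fun x => mul_le_mul_right (hg2 x) _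
        _ = ∫⁻ x, 4 * ((1 + J 1 x) * T x) ∂μ := lintegral_congr fun x => by ring
        _ = 4 * ∫⁻ x, (1 + J 1 x) * T x ∂μ :=
            lintegral_const_mul _ ((measurable_const.add (hJm 1)).mul hTm)
        _ = 8 := by rw [hTmain]; norm_num
    have hGsq : ∫⁻ x, g x * g x ∂μ ≤ 8 :=
      le_trans (lintegral_mono fun x =>
        le_mul_of_one_le_left zero_le le_self_add) hupp
    have hJ1g : ∫⁻ x, J 1 x * (g x * g x) ∂μ ≤ 8 :=
      le_trans (lintegral_mono fun x => mul_le_mul_left le_add_self _) hupp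
    -- g is a.e. finite
    have hgfin : ∀ᵐ x ∂μ, g x ≠ ⊤ := by
      have h1 : ∫⁻ x, g x * g x ∂μ ≠ ⊤ := (lt_of_le_of_lt hGsq (by norm_num)).ne
      filter_upwards [ae_lt_top (f := fun x => g x * g x) (hgm.mul hgm) h1] with x hx
      intro h
      rw [h] at hx
      simp at hx
    -- the test function
    set f : X → ℂ := fun x => ((g x).toReal : ℂ) with hfdef
    have hfm : Measurable f := Complex.measurable_ofReal.comp hgm.ennreal_toReal
    have hnf : ∀ᵐ x ∂μ, ((‖f x‖₊ : ℝ≥0∞)) ^ 2 = g x * g x := by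
      filter_upwards [hgfin] with x hx
      have h1 : (‖f x‖₊ : ℝ≥0∞) = g x := by
        rw [hfdef]
        dsimp only
        rw [Complex.nnnorm_real, ← enorm_eq_nnnorm, Real.enorm_eq_ofReal ENNReal.toReal_nonneg,
          ENNReal.ofReal_toReal hx]
      rw [h1, pow_two]
    have hfD : f ∈ {f : X → ℂ | MemLp f 2 μ ∧ MemLp (fun x => u x * f (φ x)) 2 μ} := by
      constructor
      · refine (mem2_iff hfm.aestronglyMeasurable).mpr ?_
        rw [lintegral_congr_ae hnf]
        exact lt_of_le_of_lt hGsq (by norm_num)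
      · refine (mem2_iff (hu.mul (hfm.comp hφ)).aestronglyMeasurable).mpr ?_
        show ∫⁻ x, (‖u x * f (φ x)‖₊ : ℝ≥0∞) ^ 2 ∂μ < ⊤
        rw [I1 f hfm]
        have e : ∫⁻ x, J 1 x * (‖f x‖₊ : ℝ≥0∞) ^ 2 ∂μ = ∫⁻ x, J 1 x * (g x * g x) ∂μ :=
          lintegral_congr_ae (hnf.mono fun x hx => by dsimp only; rw [hx])
        rw [e]
        exact lt_of_le_of_lt hJ1g (by norm_num)
    have hFD := hmap f hfD
    have hGfin : ∫⁻ x, J 2 x * (g x * g x) ∂μ < ⊤ := by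
      have h2 := hFD.2
      have hFm : Measurable (fun x => u x * f (φ x)) := hu.mul (hfm.comp hφ)
      have h3 : ∫⁻ x, (‖u x * (u (φ x) * f (φ (φ x)))‖₊ : ℝ≥0∞) ^ 2 ∂μ < ⊤ :=
        (mem2_iff (hu.mul (hFm.comp hφ)).aestronglyMeasurable).mp h2
      have h4 : ∫⁻ x, (‖u x * (u (φ x) * f (φ (φ x)))‖₊ : ℝ≥0∞) ^ 2 ∂μ
          = ∫⁻ x, J 2 x * (‖f x‖₊ : ℝ≥0∞) ^ 2 ∂μ := by
        rw [I2 f hfm]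
        exact I1 (fun x => u x * f (φ x)) hFm
      rw [h4] at h3
      have e : ∫⁻ x, J 2 x * (‖f x‖₊ : ℝ≥0∞) ^ 2 ∂μ = ∫⁻ x, J 2 x * (g x * g x) ∂μ :=
        lintegral_congr_ae (hnf.mono fun x hx => by dsimp only; rw [hx])
      rwa [e] at h3
    -- lower bound
    have hlow : ∀ n : ℕ, (4:ℝ≥0∞) ^ n ≤ ∫⁻ x, J 2 x * (g x * g x) ∂μ := by
      intro n
      have hig : ∀ x, i n x * i n x ≤ g x * g x :=
        fun x => mul_le_mul' (ENNReal.le_tsum n) (ENNReal.le_tsum n)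
      have e2 : ∀ x, J 2 x * (i n x * i n x)
          = (B n).indicator (fun y => (a n * a n) * J 2 y) x := by
        intro x
        by_cases hx : x ∈ B n
        · simp only [hidef, Set.indicator_of_mem hx]; ring
        · simp [hidef, Set.indicator_of_notMem hx]
      have step : (a n * a n) * ((16:ℝ≥0∞) ^ n * t n) ≤ ∫⁻ x, J 2 x * (g x * g x) ∂μ := by
        calc (a n * a n) * ((16:ℝ≥0∞) ^ n * t n)
            ≤ (a n * a n) * ∫⁻ x in B n, J 2 x ∂μ := mul_le_mul_right (hJ2B n) _
          _ = ∫⁻ x in B n, (a n * a n) * J 2 x ∂μ :=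
              (lintegral_const_mul _ (hJm 2)).symm
          _ = ∫⁻ x, J 2 x * (i n x * i n x) ∂μ := by
              rw [lintegral_congr e2, lintegral_indicator (hBmeas n) _]
          _ ≤ ∫⁻ x, J 2 x * (g x * g x) ∂μ :=
              lintegral_mono fun x => mul_le_mul_right (hig x) _
      refine le_trans (le_of_eq ?_) step
      have haat : a n * a n * t n = p n * p n := by
        rw [← hrr n]
        calc a n * a n * (r n * r n) = (a n * r n) * (a n * r n) := by ring
          _ = p n * p n := by rw [har n]
      calc (4:ℝ≥0∞) ^ n = (2⁻¹ * 2⁻¹ * 16) ^ n := by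
            congr 1
            rw [show (16:ℝ≥0∞) = 2 * (2 * 4) by norm_num]
            rw [show (2:ℝ≥0∞)⁻¹ * 2⁻¹ * (2 * (2 * 4)) = (2⁻¹ * 2) * ((2⁻¹ * 2) * 4) by ring]
            rw [ENNReal.inv_mul_cancel two_ne_zero (by simp)]
            norm_num
        _ = p n * p n * (16:ℝ≥0∞) ^ n := by rw [hpdef]; dsimp only; rw [← mul_pow, ← mul_pow]
        _ = (a n * a n * t n) * (16:ℝ≥0∞) ^ n := by rw [haat]
        _ = (a n * a n) * ((16:ℝ≥0∞) ^ n * t n) := by ring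
    -- contradiction
    obtain ⟨N, hN⟩ := ENNReal.exists_nat_gt hGfin.ne
    have h4N : (N : ℝ≥0∞) ≤ 4 ^ N := by
      have : (N : ℕ) < 4 ^ N := Nat.lt_pow_self (by norm_num)
      exact_mod_cast this.le
    exact (hN.trans_le (h4N.trans (hlow N))).false
  · rintro ⟨c, hc, hcae⟩ f hf
    simp only [Set.mem_setOf_eq] at hf ⊢
    obtain ⟨hf2, hF2⟩ := hf
    have hq : Measure.QuasiMeasurePreserving φ μ μ := ⟨hφ, hns⟩
    have hA := hf2.1.aemeasurable
    set f' : X → ℂ := hA.mk f with hf'def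
    have hf'm : Measurable f' := hA.measurable_mk
    have hff' : f =ᵐ[μ] f' := hA.ae_eq_mk
    have hcomp : (fun x => f (φ x)) =ᵐ[μ] fun x => f' (φ x) := hq.ae_eq hff'
    have hFF' : (fun x => u x * f (φ x)) =ᵐ[μ] (fun x => u x * f' (φ x)) :=
      hcomp.mono fun x hx => by
        have hx' : f (φ x) = f' (φ x) := hx
        dsimp only; rw [hx']
    have hF'm : Measurable (fun x => u x * f' (φ x)) := hu.mul (hf'm.comp hφ)
    have hGG' : (fun x => u x * (u (φ x) * f (φ (φ x)))) =ᵐ[μ]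
        (fun x => u x * (u (φ x) * f' (φ (φ x)))) :=
      (hq.ae_eq hFF').mono fun x hx => by
        have hx' : u (φ x) * f (φ (φ x)) = u (φ x) * f' (φ (φ x)) := hx
        dsimp only; rw [hx']
    have hG'm : Measurable (fun x => u x * (u (φ x) * f' (φ (φ x)))) :=
      hu.mul (hF'm.comp hφ)
    refine ⟨hF2, ?_⟩
    have : MemLp (fun x => u x * (u (φ x) * f' (φ (φ x)))) 2 μ := by
      refine (mem2_iff hG'm.aestronglyMeasurable).mpr ?_
      have hm2 : Measurable fun x => (‖f' x‖₊ : ℝ≥0∞) ^ 2 :=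
        (hf'm.nnnorm.coe_nnreal_ennreal).pow_const 2
      have key : ∫⁻ x, (‖u x * (u (φ x) * f' (φ (φ x)))‖₊ : ℝ≥0∞) ^ 2 ∂μ
          = ∫⁻ x, J 2 x * (‖f' x‖₊ : ℝ≥0∞) ^ 2 ∂μ := by
        rw [I2 f' hf'm, ← I1 (fun x => u x * f' (φ x)) hF'm]
      rw [key]
      have step : ∫⁻ x, J 2 x * (‖f' x‖₊ : ℝ≥0∞) ^ 2 ∂μ
          ≤ ∫⁻ x, (c : ℝ≥0∞) * ((‖f' x‖₊ : ℝ≥0∞) ^ 2 + J 1 x * (‖f' x‖₊ : ℝ≥0∞) ^ 2) ∂μ := by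
        refine lintegral_mono_ae (hcae.mono fun x hx => ?_)
        calc J 2 x * (‖f' x‖₊ : ℝ≥0∞) ^ 2
            ≤ (c * (1 + J 1 x)) * (‖f' x‖₊ : ℝ≥0∞) ^ 2 := mul_le_mul_left hx _
          _ = (c : ℝ≥0∞) * ((‖f' x‖₊ : ℝ≥0∞) ^ 2 + J 1 x * (‖f' x‖₊ : ℝ≥0∞) ^ 2) := by
              ring
      refine lt_of_le_of_lt step ?_
      rw [lintegral_const_mul _ (f := fun x => (‖f' x‖₊ : ℝ≥0∞) ^ 2 + J 1 x * (‖f' x‖₊ : ℝ≥0∞) ^ 2) (hm2.add ((hJm 1).mul hm2)),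
        lintegral_add_left hm2]
      have e1 : ∫⁻ x, (‖f' x‖₊ : ℝ≥0∞) ^ 2 ∂μ = ∫⁻ x, (‖f x‖₊ : ℝ≥0∞) ^ 2 ∂μ :=
        lintegral_congr_ae (hff'.mono fun x hx => by
          have hx' : f x = f' x := hx
          dsimp only; rw [hx'])
      have e2 : ∫⁻ x, J 1 x * (‖f' x‖₊ : ℝ≥0∞) ^ 2 ∂μ
          = ∫⁻ x, (‖u x * f (φ x)‖₊ : ℝ≥0∞) ^ 2 ∂μ := by
        rw [← I1 f' hf'm]
        exact lintegral_congr_ae (hFF'.mono fun x hx => by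
          have hx' : u x * f (φ x) = u x * f' (φ x) := hx
          dsimp only; rw [hx'])
      rw [e1, e2]
      exact ENNReal.mul_lt_top ENNReal.coe_lt_top
        (ENNReal.add_lt_top.mpr ⟨(mem2_iff hf2.1).mp hf2, (mem2_iff hF2.1).mp hF2⟩)
    exact (memLp_congr_ae hGG').mpr this
end

section
/- Assume D(C_φ) is dense in L²(μ). Then the composition operator C_φ maps its domain into itself if and only if there exists c > 0 such that h_2 ≤ c(1 + h_1) μ-a.e., where h_i = d(μ∘φ^{-i})/dμ. -/
open MeasureTheory ENNReal NNReal

section Helpers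

variable {X : Type*} [MeasurableSpace X] (μ : Measure X) [SigmaFinite μ]

-- L1: absolute continuity of iterates
lemma mapIter_ac (φ : X → X) (hφ : Measurable φ) (hns : (μ.map φ) ≪ μ) :
    ∀ i : ℕ, μ.map (φ^[i]) ≪ μ := by
  intro i
  induction i with
  | zero => simpa [Measure.map_id] using Measure.AbsolutelyContinuous.rfl
  | succ n ih =>
      rw [Function.iterate_succ', ← Measure.map_map hφ (hφ.iterate n)]
      exact (ih.map hφ).trans hns

-- L2: change of variables
lemma comp_lintegral (φ : X → X) (hφ : Measurable φ) (hns : (μ.map φ) ≪ μ)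
    (i : ℕ) {g : X → ℝ≥0∞} (hg : AEMeasurable g μ) :
    ∫⁻ x, g (φ^[i] x) ∂μ = ∫⁻ x, (μ.map (φ^[i])).rnDeriv μ x * g x ∂μ := by
  have hac := mapIter_ac μ φ hφ hns i
  rw [← lintegral_map' (hg.mono_ac hac) (hφ.iterate i).aemeasurable,
    lintegral_rnDeriv_mul hac hg]

-- L3: L² membership via lintegral of squared norm
lemma memL2_iff {f : X → ℂ} :
    MemLp f 2 μ ↔ AEStronglyMeasurable f μ ∧ ∫⁻ x, (‖f x‖₊ : ℝ≥0∞) ^ 2 ∂μ < ⊤ := by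
  rw [MemLp, eLpNorm_lt_top_iff_lintegral_rpow_enorm_lt_top two_ne_zero (by norm_num)]
  simp_rw [enorm_eq_nnnorm]
  have : ∀ x, (‖f x‖₊ : ℝ≥0∞) ^ ((2 : ℝ≥0∞).toReal) = (‖f x‖₊ : ℝ≥0∞) ^ 2 := by
    intro x
    rw [toReal_ofNat, show ((2:ℝ) = ((2:ℕ):ℝ)) by norm_num, ENNReal.rpow_natCast]
  simp_rw [this]

lemma exists_good_subset (A : Set X) (hA : MeasurableSet A) (hApos : μ A ≠ 0)
    (h1 : X → ℝ≥0∞) (hm1 : Measurable h1) (hfin : ∀ x ∈ A, h1 x ≠ ⊤) :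
    ∃ B, MeasurableSet B ∧ B ⊆ A ∧ 0 < ∫⁻ x in B, (1 + h1 x) ∂μ ∧
      ∫⁻ x in B, (1 + h1 x) ∂μ < ⊤ := by
  set C : ℕ → Set X := fun m => (A ∩ {x | h1 x ≤ m}) ∩ spanningSets μ m with hC
  have hCmeas : ∀ m, MeasurableSet (C m) :=
    fun m => ((hA.inter (hm1 measurableSet_Iic)).inter (measurableSet_spanningSets μ m))
  have hsub : A ⊆ ⋃ m, C m := by
    intro x hx
    obtain ⟨m₁, hm₁⟩ := ENNReal.exists_nat_gt (hfin x hx)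
    obtain ⟨m₂, hm₂⟩ := Set.mem_iUnion.1
      ((iUnion_spanningSets μ).symm ▸ Set.mem_univ x : x ∈ ⋃ m, spanningSets μ m)
    refine Set.mem_iUnion.2 ⟨max m₁ m₂, ⟨⟨hx, ?_⟩, ?_⟩⟩
    · exact le_trans hm₁.le (by exact_mod_cast Nat.cast_le.2 (le_max_left _ _))
    · exact monotone_spanningSets μ (le_max_right m₁ m₂) hm₂
  have hex : ∃ m, μ (C m) ≠ 0 := by
    by_contra hall
    push_neg at hall
    exact hApos (le_antisymm (le_trans (measure_mono hsub)
      (le_of_eq (measure_iUnion_null hall))) (by simp))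
  obtain ⟨m, hm⟩ := hex
  refine ⟨C m, hCmeas m, fun x hx => hx.1.1, ?_, ?_⟩
  · calc (0:ℝ≥0∞) < μ (C m) := pos_iff_ne_zero.2 hm
      _ = ∫⁻ _ in C m, 1 ∂μ := (setLIntegral_one _).symm
      _ ≤ ∫⁻ x in C m, (1 + h1 x) ∂μ := lintegral_mono fun x => le_self_add
  · calc ∫⁻ x in C m, (1 + h1 x) ∂μ ≤ ∫⁻ _ in C m, (1 + (m:ℝ≥0∞)) ∂μ :=
        setLIntegral_mono measurable_const fun x hx => add_le_add_right hx.1.2 1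
      _ = (1 + (m:ℝ≥0∞)) * μ (C m) := setLIntegral_const _ _
      _ < ⊤ := ENNReal.mul_lt_top (by simp) (lt_of_le_of_lt
          (measure_mono (Set.inter_subset_right)) (measure_spanningSets_lt_top μ m))

lemma core_construction (h1 h2 : X → ℝ≥0∞) (hm1 : Measurable h1) (hm2 : Measurable h2)
    (hA : ∀ n : ℕ, μ {x | (4:ℝ≥0∞)^n * (1 + h1 x) < h2 x} ≠ 0) :
    ∃ s : X → ℝ≥0∞, Measurable s ∧ ∫⁻ x, s x * (1 + h1 x) ∂μ < ⊤ ∧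
      ∫⁻ x, s x * h2 x ∂μ = ⊤ := by
  set A : ℕ → Set X := fun n => {x | (4:ℝ≥0∞)^n * (1 + h1 x) < h2 x} with hAdef
  have hAmeas : ∀ n, MeasurableSet (A n) :=
    fun n => measurableSet_lt ((measurable_const.mul (measurable_const.add hm1))) hm2
  have hfin : ∀ n, ∀ x ∈ A n, h1 x ≠ ⊤ := by
    intro n x hx hxt
    have : (4:ℝ≥0∞)^n * (1 + h1 x) = ⊤ := by
      rw [hxt]; simp [ENNReal.mul_eq_top]
    rw [hAdef] at hx
    simp only [Set.mem_setOf_eq] at hx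
    rw [this] at hx
    exact not_top_lt hx
  choose B hBmeas hBsub hpos hwfin using fun n =>
    exists_good_subset μ (A n) (hAmeas n) (hA n) h1 hm1 (hfin n)
  set w : ℕ → ℝ≥0∞ := fun n => ∫⁻ x in B n, (1 + h1 x) ∂μ with hwdef
  set b : ℕ → ℝ≥0∞ := fun n => ((2:ℝ≥0∞)^n * w n)⁻¹ with hbdef
  have hw0 : ∀ n, w n ≠ 0 := fun n => (hpos n).ne'
  have hwt : ∀ n, w n ≠ ⊤ := fun n => (hwfin n).ne
  set s : X → ℝ≥0∞ := fun x => ∑' n, (B n).indicator (fun _ => b n) x with hsdef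
  have hsmeas : Measurable s :=
    Measurable.ennreal_tsum fun n => measurable_const.indicator (hBmeas n)
  have key : ∀ g : X → ℝ≥0∞, Measurable g →
      ∫⁻ x, s x * g x ∂μ = ∑' n, b n * ∫⁻ x in B n, g x ∂μ := by
    intro g hg
    have h1' : ∀ x, s x * g x = ∑' n, (B n).indicator (fun _ => b n) x * g x :=
      fun x => ENNReal.tsum_mul_right.symm
    simp_rw [h1']
    rw [lintegral_tsum (f := fun n x => (B n).indicator (fun _ => b n) x * g x) fun n => ((measurable_const.indicator (hBmeas n)).mul hg).aemeasurable]
    congr 1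
    funext n
    have h2' : ∀ x, (B n).indicator (fun _ => b n) x * g x
        = (B n).indicator (fun y => b n * g y) x := by
      intro x
      by_cases hx : x ∈ B n <;> simp [hx]
    simp_rw [h2']
    rw [lintegral_indicator (hBmeas n), lintegral_const_mul _ hg]
  refine ⟨s, hsmeas, ?_, ?_⟩
  · rw [key (fun x => 1 + h1 x) (measurable_const.add hm1)]
    have hbw : ∀ n, b n * w n = ((2:ℝ≥0∞)^n)⁻¹ := by
      intro n
      show ((2:ℝ≥0∞)^n * w n)⁻¹ * w n = ((2:ℝ≥0∞)^n)⁻¹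
      rw [ENNReal.mul_inv (Or.inl (pow_ne_zero _ (by norm_num))) (Or.inl (by simp)), mul_assoc,
        ENNReal.inv_mul_cancel (hw0 n) (hwt n), mul_one]
    change ∑' n, b n * w n < ⊤
    simp_rw [hbw]
    calc ∑' n, ((2:ℝ≥0∞)^n)⁻¹ = ∑' n, ((2:ℝ≥0∞)⁻¹)^n := by simp_rw [ENNReal.inv_pow]
      _ = (1 - 2⁻¹)⁻¹ := ENNReal.tsum_geometric _
      _ < ⊤ := by
          rw [ENNReal.inv_lt_top, tsub_pos_iff_lt]
          exact ENNReal.inv_lt_one.2 one_lt_two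
  · have hge : ∀ n : ℕ, (2:ℝ≥0∞)^n ≤ ∫⁻ x, s x * h2 x ∂μ := by
      intro n
      have step1 : (B n).indicator (fun _ => b n) ≤ s := fun x => ENNReal.le_tsum n
      have step2 : ∫⁻ x, (B n).indicator (fun _ => b n) x * h2 x ∂μ ≤ ∫⁻ x, s x * h2 x ∂μ :=
        lintegral_mono fun x => mul_le_mul_left (step1 x) _
      refine le_trans ?_ step2
      have h2' : ∀ x, (B n).indicator (fun _ => b n) x * h2 x
          = (B n).indicator (fun y => b n * h2 y) x := by
        intro x; by_cases hx : x ∈ B n <;> simp [hx]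
      simp_rw [h2']
      rw [lintegral_indicator (hBmeas n), lintegral_const_mul _ hm2]
      have hsl : (4:ℝ≥0∞)^n * w n ≤ ∫⁻ x in B n, h2 x ∂μ := by
        simp only [hwdef]; rw [← lintegral_const_mul (f := fun x => 1 + h1 x) _ (measurable_const.add hm1)]
        exact setLIntegral_mono hm2 fun x hx => (hBsub n hx).le
      calc (2:ℝ≥0∞)^n = b n * ((4:ℝ≥0∞)^n * w n) := by
            show (2:ℝ≥0∞)^n = ((2:ℝ≥0∞)^n * w n)⁻¹ * ((4:ℝ≥0∞)^n * w n)
            rw [show (4:ℝ≥0∞)^n * w n = ((2:ℝ≥0∞)^n * w n) * (2:ℝ≥0∞)^n by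
              rw [show (4:ℝ≥0∞) = 2*2 by norm_num, mul_pow]; ring]
            rw [← mul_assoc, ENNReal.inv_mul_cancel
              (mul_ne_zero (pow_ne_zero _ (by norm_num)) (hw0 n))
              (ENNReal.mul_ne_top (by simp) (hwt n)), one_mul]
        _ ≤ b n * ∫⁻ x in B n, h2 x ∂μ := mul_le_mul_right hsl _
    by_contra hne
    obtain ⟨k, hk⟩ := ENNReal.exists_nat_gt hne
    have : (k:ℝ≥0∞) ≤ 2^k := by exact_mod_cast (Nat.lt_two_pow_self (n := k)).le
    exact absurd (lt_of_lt_of_le hk this) (not_lt.2 (hge k))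

end Helpers

/-- Corollary 2.4: if `D(C_φ)` is dense in `L²(μ)` then `C_φ` maps its domain into
itself iff there is `c > 0` with `h₂ ≤ c(1 + h₁)` a.e., where `hᵢ = d(μ∘φ⁻ⁱ)/dμ`. -/
theorem stmt5
    {X : Type*} [MeasurableSpace X] (μ : Measure X) [SigmaFinite μ]
    (φ : X → X) (hφ : Measurable φ)
    (hns : (μ.map φ) ≪ μ)
    (h : ℕ → X → ℝ≥0∞)
    (hh : ∀ i : ℕ, h i = (μ.map (φ^[i])).rnDeriv μ)
    (D : Set (X → ℂ))
    (hD : D = {f | MemLp f 2 μ ∧ MemLp (fun x => f (φ x)) 2 μ})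
    (hdense : Dense {f : Lp ℂ 2 μ | MemLp (fun x => (f : X → ℂ) (φ x)) 2 μ}) :
    (∀ f ∈ D, (fun x => f (φ x)) ∈ D) ↔
      ∃ c : ℝ≥0, 0 < c ∧ ∀ᵐ x ∂μ, h 2 x ≤ c * (1 + h 1 x) := by
  have hm1 : Measurable (h 1) := by rw [hh 1]; exact Measure.measurable_rnDeriv _ _
  have hm2 : Measurable (h 2) := by rw [hh 2]; exact Measure.measurable_rnDeriv _ _
  have hcv : ∀ i : ℕ, ∀ g : X → ℝ≥0∞, AEMeasurable g μ →
      ∫⁻ x, g (φ^[i] x) ∂μ = ∫⁻ x, h i x * g x ∂μ := by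
    intro i g hg; rw [hh i]; exact comp_lintegral μ φ hφ hns i hg
  constructor
  · intro hmap
    by_contra hc
    push_neg at hc
    have hA : ∀ n : ℕ, μ {x | (4:ℝ≥0∞)^n * (1 + h 1 x) < h 2 x} ≠ 0 := by
      intro n
      have hcn := hc ((4:ℝ≥0)^n) (by positivity)
      have h4 : (((4:ℝ≥0)^n : ℝ≥0) : ℝ≥0∞) = (4:ℝ≥0∞)^n := by push_cast; ring
      intro h0
      apply hcn
      rw [ae_iff]
      simp only [not_le, not_not, h4]
      exact h0
    obtain ⟨s, hsmeas, hsfin, hstop⟩ := core_construction μ (h 1) (h 2) hm1 hm2 hA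
    set F : X → ℂ := fun x => (((s x) ^ (1/2:ℝ)).toReal : ℂ) with hFdef
    have hFmeas : Measurable F :=
      Complex.measurable_ofReal.comp (ENNReal.measurable_toReal.comp
        (ENNReal.continuous_rpow_const.measurable.comp hsmeas))
    have hsint : ∫⁻ x, s x ∂μ < ⊤ :=
      lt_of_le_of_lt (lintegral_mono fun x => le_mul_of_one_le_right' le_self_add) hsfin
    have haes : ∀ᵐ x ∂μ, s x < ⊤ := ae_lt_top hsmeas hsint.ne
    have hFs : ∀ᵐ x ∂μ, ((‖F x‖₊ : ℝ≥0∞)) ^ 2 = s x := by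
      refine haes.mono fun x hx => ?_
      have ht : s x ^ (1/2:ℝ) ≠ ⊤ := ENNReal.rpow_ne_top_of_nonneg (by norm_num) hx.ne
      have hb : (‖F x‖₊ : ℝ≥0∞) = s x ^ (1/2:ℝ) := by
        rw [hFdef]
        show ((‖(((s x ^ (1/2:ℝ)).toReal : ℝ) : ℂ)‖₊ : ℝ≥0∞)) = s x ^ (1/2:ℝ)
        rw [Complex.nnnorm_real, ← Real.toNNReal_eq_nnnorm_of_nonneg ENNReal.toReal_nonneg]
        exact ENNReal.ofReal_toReal ht
      rw [hb, ← ENNReal.rpow_natCast, ← ENNReal.rpow_mul]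
      norm_num
    have hg2 : Measurable (fun x => ((‖F x‖₊:ℝ≥0∞))^2) :=
      (hFmeas.nnnorm.coe_nnreal_ennreal).pow_const 2
    have hIF : ∫⁻ x, ((‖F x‖₊:ℝ≥0∞))^2 ∂μ < ⊤ := by
      rw [lintegral_congr_ae hFs]; exact hsint
    have hIF1 : ∫⁻ x, ((‖F (φ x)‖₊:ℝ≥0∞))^2 ∂μ < ⊤ := by
      calc ∫⁻ x, ((‖F (φ x)‖₊:ℝ≥0∞))^2 ∂μ
          = ∫⁻ x, h 1 x * ((‖F x‖₊:ℝ≥0∞))^2 ∂μ := hcv 1 _ hg2.aemeasurable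
        _ = ∫⁻ x, h 1 x * s x ∂μ :=
            lintegral_congr_ae (hFs.mono fun x hx => by simp only [hx])
        _ ≤ ∫⁻ x, s x * (1 + h 1 x) ∂μ := lintegral_mono fun x => by
            rw [mul_comm]; exact mul_le_mul_right le_add_self _
        _ < ⊤ := hsfin
    have hFD : F ∈ D := by
      rw [hD]
      exact ⟨(memL2_iff μ).2 ⟨hFmeas.aestronglyMeasurable, hIF⟩,
             (memL2_iff μ).2 ⟨(hFmeas.comp hφ).aestronglyMeasurable, hIF1⟩⟩
    have hmem := hmap F hFD
    rw [hD] at hmem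
    have h2nd := hmem.2
    have hfin2 := ((memL2_iff μ).1 h2nd).2
    have htop : ∫⁻ x, ((‖F (φ (φ x))‖₊:ℝ≥0∞))^2 ∂μ = ⊤ := by
      calc ∫⁻ x, ((‖F (φ (φ x))‖₊:ℝ≥0∞))^2 ∂μ
          = ∫⁻ x, h 2 x * ((‖F x‖₊:ℝ≥0∞))^2 ∂μ := hcv 2 _ hg2.aemeasurable
        _ = ∫⁻ x, s x * h 2 x ∂μ :=
            lintegral_congr_ae (hFs.mono fun x hx => by simp only [hx]; rw [mul_comm])
        _ = ⊤ := hstop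
    exact hfin2.ne htop
  · rintro ⟨c, hc0, hbound⟩ f hfD
    rw [hD] at hfD ⊢
    obtain ⟨hf1, hf2⟩ := hfD
    refine ⟨hf2, ?_⟩
    have hfaes : AEStronglyMeasurable f μ := hf1.1
    have hg : AEMeasurable (fun x => ((‖f x‖₊:ℝ≥0∞))^2) μ := hfaes.enorm.pow_const 2
    have hqmp : Measure.QuasiMeasurePreserving (φ^[2]) μ μ :=
      ⟨hφ.iterate 2, mapIter_ac μ φ hφ hns 2⟩
    have haesm2 : AEStronglyMeasurable (fun x => f (φ (φ x))) μ :=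
      hfaes.comp_quasiMeasurePreserving hqmp
    refine (memL2_iff μ).2 ⟨haesm2, ?_⟩
    have e2 : ∫⁻ x, ((‖f (φ (φ x))‖₊:ℝ≥0∞))^2 ∂μ
        = ∫⁻ x, h 2 x * ((‖f x‖₊:ℝ≥0∞))^2 ∂μ := hcv 2 _ hg
    have e1 : ∫⁻ x, ((‖f (φ x)‖₊:ℝ≥0∞))^2 ∂μ
        = ∫⁻ x, h 1 x * ((‖f x‖₊:ℝ≥0∞))^2 ∂μ := hcv 1 _ hg
    have hfin1 : ∫⁻ x, ((‖f x‖₊:ℝ≥0∞))^2 ∂μ < ⊤ := (memL2_iff μ |>.1 hf1).2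
    have hfin2 : ∫⁻ x, h 1 x * ((‖f x‖₊:ℝ≥0∞))^2 ∂μ < ⊤ :=
      e1 ▸ (memL2_iff μ |>.1 hf2).2
    rw [e2]
    calc ∫⁻ x, h 2 x * ((‖f x‖₊:ℝ≥0∞))^2 ∂μ
        ≤ ∫⁻ x, (c * (1 + h 1 x)) * ((‖f x‖₊:ℝ≥0∞))^2 ∂μ :=
          lintegral_mono_ae (hbound.mono fun x hx => mul_le_mul_left hx _)
      _ = ∫⁻ x, c * (((‖f x‖₊:ℝ≥0∞))^2 + h 1 x * ((‖f x‖₊:ℝ≥0∞))^2) ∂μ := by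
          congr 1; funext x; ring
      _ = c * (∫⁻ x, ((‖f x‖₊:ℝ≥0∞))^2 ∂μ + ∫⁻ x, h 1 x * ((‖f x‖₊:ℝ≥0∞))^2 ∂μ) := by
          rw [lintegral_const_mul' _ _ ENNReal.coe_ne_top,
            lintegral_add_left' hg _]
      _ < ⊤ := ENNReal.mul_lt_top ENNReal.coe_lt_top
          (ENNReal.add_lt_top.2 ⟨hfin1, hfin2⟩)
end

section
/- Let M_u be the multiplication operator f ↦ u·f on L²(μ) with domain D(M_u) = {f ∈ L²(μ) : u·f ∈ L²(μ)}, assumed densely defined. Then M_u maps its domain into itself if and only if there exists c > 0 such that |u|⁴ ≤ c(1 + |u|²) μ-a.e. -/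
open MeasureTheory ENNReal

section helpers
variable {X : Type*} [MeasurableSpace X] {μ : Measure X}

lemma memLp2_iff {g : X → ℂ} (hg : AEStronglyMeasurable g μ) :
    MemLp g 2 μ ↔ ∫⁻ x, (‖g x‖₊ : ℝ≥0∞) ^ 2 ∂μ < ⊤ := by
  rw [MemLp, and_iff_right hg,
    eLpNorm_lt_top_iff_lintegral_rpow_enorm_lt_top two_ne_zero ENNReal.ofNat_ne_top]
  norm_num
  rfl

lemma lint_eq (F : ℕ → Set X) (hFm : ∀ k, MeasurableSet (F k))
    (hFdisj : Pairwise (Function.onFun Disjoint F))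
    (g : X → ℂ) (hg0 : ∀ x ∉ ⋃ k, F k, g x = 0) :
    ∫⁻ x, (‖g x‖₊ : ℝ≥0∞) ^ 2 ∂μ = ∑' k, ∫⁻ x in F k, (‖g x‖₊ : ℝ≥0∞) ^ 2 ∂μ := by
  rw [← lintegral_iUnion hFm hFdisj, ← lintegral_indicator (MeasurableSet.iUnion hFm)]
  congr 1; ext x
  by_cases hx : x ∈ ⋃ k, F k
  · rw [Set.indicator_of_mem hx]
  · rw [Set.indicator_of_notMem hx, hg0 x hx]; simp

lemma nnorm_sq_eq (z : ℂ) : (‖z‖₊ : ℝ≥0∞) ^ 2 = ENNReal.ofReal (‖z‖ ^ 2) := by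
  rw [ENNReal.ofReal_pow (norm_nonneg _), ofReal_norm_eq_enorm, enorm_eq_nnnorm]

lemma lint_bound_le {s : Set X} {g : X → ℂ} {C : ℝ}
    (h : ∀ x ∈ s, ‖g x‖ ≤ C) :
    ∫⁻ x in s, (‖g x‖₊ : ℝ≥0∞) ^ 2 ∂μ ≤ ENNReal.ofReal (C ^ 2) * μ s := by
  rw [← setLIntegral_const]
  refine setLIntegral_mono measurable_const fun x hx => ?_
  rw [nnorm_sq_eq]
  exact ENNReal.ofReal_le_ofReal (by nlinarith [norm_nonneg (g x), h x hx])

lemma lint_bound_ge {s : Set X} (hs : MeasurableSet s) {g : X → ℂ} (hg : Measurable g) {C : ℝ}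
    (hC : 0 ≤ C) (h : ∀ x ∈ s, C ≤ ‖g x‖) :
    ENNReal.ofReal (C ^ 2) * μ s ≤ ∫⁻ x in s, (‖g x‖₊ : ℝ≥0∞) ^ 2 ∂μ := by
  rw [← setLIntegral_const]
  refine setLIntegral_mono ((hg.nnnorm.coe_nnreal_ennreal).pow_const 2) fun x hx => ?_
  rw [nnorm_sq_eq]
  exact ENNReal.ofReal_le_ofReal (by nlinarith [norm_nonneg (g x), h x hx])

lemma sum_fin {c : ℝ} (hc : 0 ≤ c) :
    ∑' k : ℕ, ENNReal.ofReal (c * ((k + 1 : ℝ) ^ 2)⁻¹) < ⊤ := by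
  have hbase : Summable (fun n : ℕ => 1 / (n : ℝ) ^ 2) :=
    Real.summable_one_div_nat_pow.mpr one_lt_two
  have h1 : Summable (fun k : ℕ => ((k + 1 : ℝ) ^ 2)⁻¹) := by
    have := (summable_nat_add_iff 1).mpr hbase
    refine this.congr fun k => ?_
    push_cast
    rw [one_div]
  have hs : Summable (fun k : ℕ => c * ((k + 1 : ℝ) ^ 2)⁻¹) := h1.mul_left c
  rw [← ENNReal.ofReal_tsum_of_nonneg (fun n => by positivity) hs]
  exact ENNReal.ofReal_lt_top






-- Step A: from unboundedness get infinitely many shells of positive measure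
lemma shells {u : X → ℂ} (hu : Measurable u)
    (hA : ∀ n : ℕ, μ {x | (n : ℝ) < ‖u x‖} ≠ 0) (N : ℕ) :
    ∃ m, N ≤ m ∧ μ {x | (m : ℝ) < ‖u x‖ ∧ ‖u x‖ ≤ (m : ℝ) + 1} ≠ 0 := by
  by_contra hk
  push_neg at hk
  apply hA N
  refine measure_mono_null (t := ⋃ j : ℕ, {x | ((N + j : ℕ) : ℝ) < ‖u x‖ ∧ ‖u x‖ ≤ ((N + j : ℕ) : ℝ) + 1}) ?_
    (measure_iUnion_null fun j => hk _ (Nat.le_add_right _ _))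
  intro x hx
  have hx' : (N : ℝ) < ‖u x‖ := hx
  have ht0 : (0 : ℝ) ≤ ‖u x‖ := norm_nonneg _
  have hcN : N < ⌈‖u x‖⌉₊ := Nat.lt_ceil.mpr hx'
  have h1 : 1 ≤ ⌈‖u x‖⌉₊ := by omega
  refine Set.mem_iUnion.mpr ⟨⌈‖u x‖⌉₊ - 1 - N, ?_⟩
  have hm : N + (⌈‖u x‖⌉₊ - 1 - N) = ⌈‖u x‖⌉₊ - 1 := by omega
  rw [hm]
  have hlt := Nat.ceil_lt_add_one ht0
  have hle := Nat.le_ceil ‖u x‖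
  constructor
  · show ((⌈‖u x‖⌉₊ - 1 : ℕ) : ℝ) < ‖u x‖
    rw [Nat.cast_sub h1]
    push_cast
    linarith
  · show ‖u x‖ ≤ ((⌈‖u x‖⌉₊ - 1 : ℕ) : ℝ) + 1
    rw [Nat.cast_sub h1]
    push_cast
    linarith


lemma hard_dir [SigmaFinite μ] {u : X → ℂ} (hu : Measurable u)
    (hA : ∀ n : ℕ, μ {x | (n : ℝ) < ‖u x‖} ≠ 0) :
    ∃ f : X → ℂ, MemLp f 2 μ ∧ MemLp (fun x => u x * f x) 2 μ ∧
      ¬ MemLp (fun x => u x * (u x * f x)) 2 μ := by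
  classical
  -- strictly increasing sequence of shells with positive measure
  choose g hg1 hg2 using shells hu hA
  obtain ⟨n, hn0, hnsucc⟩ : ∃ n : ℕ → ℕ, n 0 = g 1 ∧ ∀ k, n (k + 1) = g (n k + 1) :=
    ⟨fun k => Nat.rec (g 1) (fun _ p => g (p + 1)) k, rfl, fun _ => rfl⟩
  have hge : ∀ k, k + 1 ≤ n k := by
    intro k
    induction k with
    | zero => rw [hn0]; exact hg1 1
    | succ k ih => rw [hnsucc]; exact le_trans (by omega) (hg1 (n k + 1))
  have hmono : ∀ k, n k + 1 ≤ n (k + 1) := fun k => by rw [hnsucc]; exact hg1 _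
  have hsm : StrictMono n := strictMono_nat_of_lt_succ fun k => by have := hmono k; omega
  have hnE : ∀ k, μ {x | (n k : ℝ) < ‖u x‖ ∧ ‖u x‖ ≤ (n k : ℝ) + 1} ≠ 0 := by
    intro k
    cases k with
    | zero => rw [hn0]; exact hg2 1
    | succ k => rw [hnsucc]; exact hg2 _
  have hEm : ∀ m : ℕ, MeasurableSet {x | (m : ℝ) < ‖u x‖ ∧ ‖u x‖ ≤ (m : ℝ) + 1} := fun m =>
    (measurableSet_lt measurable_const hu.norm).inter (measurableSet_le hu.norm measurable_const)
  -- finite-measure pieces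
  have hFex : ∀ k, ∃ t, MeasurableSet t ∧ t ⊆ {x | (n k : ℝ) < ‖u x‖ ∧ ‖u x‖ ≤ (n k : ℝ) + 1}
      ∧ 0 < μ t ∧ μ t < ⊤ := fun k =>
    Measure.exists_subset_measure_lt_top (hEm (n k)) (pos_iff_ne_zero.mpr (hnE k))
  choose F hFm hFsub hFpos hFfin using hFex
  have hFu1 : ∀ k, ∀ x ∈ F k, (n k : ℝ) < ‖u x‖ := fun k x hx => (hFsub k hx).1
  have hFu2 : ∀ k, ∀ x ∈ F k, ‖u x‖ ≤ (n k : ℝ) + 1 := fun k x hx => (hFsub k hx).2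
  have hFdisj : Pairwise (Function.onFun Disjoint F) := by
    have hEdisj : ∀ {m m' : ℕ}, m < m' →
        Disjoint {x | (m : ℝ) < ‖u x‖ ∧ ‖u x‖ ≤ (m : ℝ) + 1}
          {x | (m' : ℝ) < ‖u x‖ ∧ ‖u x‖ ≤ (m' : ℝ) + 1} := by
      intro m m' h
      rw [Set.disjoint_left]
      rintro x ⟨_, h2⟩ ⟨h3, _⟩
      have : (m : ℝ) + 1 ≤ (m' : ℝ) := by exact_mod_cast h
      linarith
    intro k j hkj
    rcases (hsm.injective.ne hkj).lt_or_gt with h | h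
    · exact (hEdisj h).mono (hFsub k) (hFsub j)
    · exact ((hEdisj h).symm).mono (hFsub k) (hFsub j)
  -- amplitudes
  have hr : ∀ k, 0 < (μ (F k)).toReal := fun k =>
    ENNReal.toReal_pos (hFpos k).ne' (hFfin k).ne
  have hnpos : ∀ k, (0 : ℝ) < (n k : ℝ) := fun k => by
    have := hge k; exact_mod_cast Nat.lt_of_lt_of_le (Nat.succ_pos k) this
  obtain ⟨a, ha0, ha2⟩ : ∃ a : ℕ → ℝ, (∀ k, 0 ≤ a k) ∧
      ∀ k, a k ^ 2 = ((n k : ℝ) ^ 4)⁻¹ / (μ (F k)).toReal :=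
    ⟨fun k => Real.sqrt (((n k : ℝ) ^ 4)⁻¹ / (μ (F k)).toReal),
      fun k => Real.sqrt_nonneg _, fun k => Real.sq_sqrt (by positivity)⟩
  -- the function
  obtain ⟨f, hfmeas, hfval, hfzero⟩ : ∃ f : X → ℂ, Measurable f ∧
      (∀ k, ∀ x ∈ F k, f x = (a k : ℂ)) ∧ (∀ x ∉ ⋃ k, F k, f x = 0) := by
    refine ⟨Set.indicator (⋃ k, F k)
      (fun y => ((fun m : ℕ => if h : ∃ k, n k + 1 = m then a h.choose else 0) ⌈‖u y‖⌉₊ : ℝ)),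
      ?_, ?_, ?_⟩
    · refine Measurable.indicator ?_ (MeasurableSet.iUnion hFm)
      have h1 : Measurable fun y => ⌈‖u y‖⌉₊ := hu.norm.nat_ceil
      have h2 : Measurable fun y : X =>
          (fun m : ℕ => if h : ∃ k, n k + 1 = m then a h.choose else 0) ⌈‖u y‖⌉₊ :=
        (measurable_from_nat (f := fun m : ℕ => if h : ∃ k, n k + 1 = m then a h.choose else 0)).comp h1
      exact Complex.measurable_ofReal.comp h2
    · intro k x hx
      have hxU : x ∈ ⋃ k, F k := Set.mem_iUnion.mpr ⟨k, hx⟩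
      have hceil : ⌈‖u x‖⌉₊ = n k + 1 := by
        rw [Nat.ceil_eq_iff (by omega)]
        push_cast
        exact ⟨by simpa using hFu1 k x hx, hFu2 k x hx⟩
      rw [Set.indicator_of_mem hxU]
      simp only [hceil]
      have hex : ∃ j, n j + 1 = n k + 1 := ⟨k, rfl⟩
      rw [dif_pos hex]
      have hspec := hex.choose_spec
      have : hex.choose = k := hsm.injective (by omega)
      rw [this]
    · intro x hx
      rw [Set.indicator_of_notMem hx]
  -- key measure computation
  have hkey : ∀ (k : ℕ) (c : ℝ), 0 ≤ c →
      ENNReal.ofReal (c * a k ^ 2) * μ (F k) = ENNReal.ofReal (c * ((n k : ℝ) ^ 4)⁻¹) := by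
    intro k c hc
    rw [ha2 k, ← ENNReal.ofReal_toReal (hFfin k).ne, ← ENNReal.ofReal_mul (by positivity)]
    congr 1
    have hrne := (hr k).ne'
    field_simp
    rw [ENNReal.toReal_ofReal (hr k).le, mul_div_mul_right _ _ hrne]
  have hUz : ∀ x ∉ ⋃ k, F k, u x * f x = 0 := fun x hx => by rw [hfzero x hx, mul_zero]
  have hUz2 : ∀ x ∉ ⋃ k, F k, u x * (u x * f x) = 0 := fun x hx => by
    rw [hfzero x hx, mul_zero, mul_zero]
  have hnormf : ∀ k, ∀ x ∈ F k, ‖f x‖ = a k := by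
    intro k x hx
    rw [hfval k x hx, Complex.norm_real, Real.norm_of_nonneg (ha0 k)]
  have hk1 : ∀ k : ℕ, ((k:ℝ) + 1) ≤ (n k : ℝ) := fun k => by exact_mod_cast hge k
  have hk0 : ∀ k : ℕ, (0:ℝ) ≤ ((k:ℝ) + 1) := fun k => by positivity
  have hone : ∀ k, (1:ℝ) ≤ (n k : ℝ) := fun k =>
    le_trans (by linarith [(Nat.cast_nonneg k : (0:ℝ) ≤ (k:ℝ))]) (hk1 k)
  have hsqle : ∀ k : ℕ, ((k:ℝ) + 1)^2 ≤ (n k : ℝ)^2 := fun k => by nlinarith [hk1 k, hk0 k]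
  have h24 : ∀ k, (n k : ℝ)^2 ≤ (n k : ℝ)^4 := fun k => by nlinarith [hone k, sq_nonneg ((n k : ℝ)^2 - 1), sq_nonneg (n k : ℝ)]
  -- f ∈ L²
  have hf2 : MemLp f 2 μ := by
    rw [memLp2_iff hfmeas.aestronglyMeasurable, lint_eq F hFm hFdisj f hfzero]
    refine lt_of_le_of_lt (ENNReal.tsum_le_tsum fun k => ?_) (sum_fin (c := 1) one_pos.le)
    calc ∫⁻ x in F k, (‖f x‖₊ : ℝ≥0∞)^2 ∂μ ≤ ENNReal.ofReal (1 * a k ^ 2) * μ (F k) := by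
          rw [one_mul]; exact lint_bound_le fun x hx => (hnormf k x hx).le
    _ = ENNReal.ofReal (1 * ((n k : ℝ)^4)⁻¹) := hkey k 1 one_pos.le
    _ ≤ ENNReal.ofReal (1 * ((k + 1 : ℝ)^2)⁻¹) := by
        apply ENNReal.ofReal_le_ofReal
        rw [one_mul, one_mul]
        exact inv_anti₀ (by positivity) (le_trans (hsqle k) (h24 k))
  -- u·f ∈ L²
  have huf2 : MemLp (fun x => u x * f x) 2 μ := by
    rw [memLp2_iff (g := fun x => u x * f x) (hu.mul hfmeas).aestronglyMeasurable, lint_eq F hFm hFdisj _ hUz]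
    refine lt_of_le_of_lt (ENNReal.tsum_le_tsum fun k => ?_) (sum_fin (c := 4) (by norm_num))
    calc ∫⁻ x in F k, (‖u x * f x‖₊ : ℝ≥0∞)^2 ∂μ
        ≤ ENNReal.ofReal ((2 * (n k : ℝ) * a k) ^ 2) * μ (F k) := by
          refine lint_bound_le fun x hx => ?_
          rw [norm_mul, hnormf k x hx]
          have h2 := hFu2 k x hx
          nlinarith [ha0 k, hone k]
    _ = ENNReal.ofReal ((4 * (n k : ℝ)^2) * a k ^ 2) * μ (F k) := by
          rw [show (2 * (n k : ℝ) * a k)^2 = (4 * (n k : ℝ)^2) * a k ^ 2 from by ring]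
    _ = ENNReal.ofReal ((4 * (n k : ℝ)^2) * ((n k : ℝ)^4)⁻¹) := hkey k _ (by positivity)
    _ ≤ ENNReal.ofReal (4 * ((k + 1 : ℝ)^2)⁻¹) := by
        apply ENNReal.ofReal_le_ofReal
        have hne : (n k : ℝ) ≠ 0 := (hnpos k).ne'
        rw [show (4 * (n k : ℝ)^2) * ((n k : ℝ)^4)⁻¹ = 4 * ((n k : ℝ)^2)⁻¹ from by
          field_simp]
        have := inv_anti₀ (show (0:ℝ) < (k+1:ℝ)^2 by positivity) (hsqle k)
        linarith
  -- u·(u·f) ∉ L²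
  have hdiv : ∫⁻ x, (‖u x * (u x * f x)‖₊ : ℝ≥0∞)^2 ∂μ = ⊤ := by
    rw [lint_eq F hFm hFdisj _ hUz2, eq_top_iff]
    have htop : (⊤ : ℝ≥0∞) = ∑' _ : ℕ, (1 : ℝ≥0∞) :=
      (ENNReal.tsum_const_eq_top_of_ne_zero one_ne_zero).symm
    rw [htop]
    refine ENNReal.tsum_le_tsum fun k => ?_
    have hone' : ENNReal.ofReal (((n k : ℝ)^2 * a k)^2) * μ (F k) = 1 := by
      rw [show ((n k : ℝ)^2 * a k)^2 = ((n k : ℝ)^4) * a k ^ 2 from by ring,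
        hkey k _ (by positivity), mul_inv_cancel₀ (pow_pos (hnpos k) 4).ne', ENNReal.ofReal_one]
    rw [← hone']
    refine lint_bound_ge (g := fun x => u x * (u x * f x)) (hFm k) (hu.mul (hu.mul hfmeas)) (mul_nonneg (by positivity) (ha0 k)) fun x hx => ?_
    rw [norm_mul, norm_mul, hnormf k x hx]
    nlinarith [ha0 k, hFu1 k x hx, hnpos k, norm_nonneg (u x),
      mul_le_mul_of_nonneg_right (mul_le_mul (hFu1 k x hx).le (hFu1 k x hx).le (hnpos k).le (norm_nonneg (u x))) (ha0 k)]
  refine ⟨f, hf2, huf2, fun hmem => ?_⟩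
  rw [memLp2_iff (g := fun x => u x * (u x * f x)) (hu.mul (hu.mul hfmeas)).aestronglyMeasurable, hdiv] at hmem
  exact lt_irrefl _ hmem



lemma easy_dir {X : Type*} [MeasurableSpace X] {μ : Measure X}
    {u : X → ℂ} (hu : Measurable u) {c : ℝ} (hc : 0 < c)
    (hb : ∀ᵐ x ∂μ, ‖u x‖ ^ 4 ≤ c * (1 + ‖u x‖ ^ 2))
    {f : X → ℂ} (hf2 : MemLp f 2 μ) (huf2 : MemLp (fun x => u x * f x) 2 μ) :
    MemLp (fun x => u x * (u x * f x)) 2 μ := by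
  have hg : MemLp (fun x => Real.sqrt c * (‖f x‖ + ‖u x * f x‖)) 2 μ :=
    (hf2.norm.add huf2.norm).const_mul _
  refine MemLp.of_le hg
    ((hu.aemeasurable.mul (hu.aemeasurable.mul hf2.aestronglyMeasurable.aemeasurable)).aestronglyMeasurable) ?_
  filter_upwards [hb] with x hx
  have h0 : (0:ℝ) ≤ ‖u x‖ := norm_nonneg _
  have h1 : (0:ℝ) ≤ ‖f x‖ := norm_nonneg _
  have hsc : Real.sqrt c ^ 2 = c := Real.sq_sqrt hc.le
  have hs : 0 < Real.sqrt c := Real.sqrt_pos.mpr hc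
  have key : ‖u x‖ ^ 2 ≤ Real.sqrt c * (1 + ‖u x‖) := by
    by_contra hlt
    push_neg at hlt
    have h2 : (Real.sqrt c * (1 + ‖u x‖)) ^ 2 < (‖u x‖ ^ 2) ^ 2 := by
      nlinarith [mul_pos hs (by positivity : (0:ℝ) < 1 + ‖u x‖)]
    nlinarith [mul_nonneg hc.le h0]
  rw [norm_mul, norm_mul, Real.norm_of_nonneg (by positivity)]
  nlinarith [mul_le_mul_of_nonneg_right key h1]


end helpers

/-- Corollary 2.5: if `D(M_u)` is dense in `L²(μ)` then `M_u` maps its domain into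
itself iff there is `c > 0` with `|u|⁴ ≤ c(1 + |u|²)` a.e. -/
theorem stmt6
    {X : Type*} [MeasurableSpace X] (μ : Measure X) [SigmaFinite μ]
    (u : X → ℂ) (hu : Measurable u)
    (D : Set (X → ℂ))
    (hD : D = {f | MemLp f 2 μ ∧ MemLp (fun x => u x * f x) 2 μ})
    (hdense : Dense {f : Lp ℂ 2 μ | MemLp (fun x => u x * (f : X → ℂ) x) 2 μ}) :
    (∀ f ∈ D, (fun x => u x * f x) ∈ D) ↔
      ∃ c : ℝ, 0 < c ∧ ∀ᵐ x ∂μ, ‖u x‖ ^ 4 ≤ c * (1 + ‖u x‖ ^ 2) := by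
  subst hD
  constructor
  · intro h
    by_contra hc
    simp only [not_exists, not_and] at hc
    have hA : ∀ n : ℕ, μ {x | (n : ℝ) < ‖u x‖} ≠ 0 := by
      intro n h0
      refine hc (((n : ℝ) + 1) ^ 4) (by positivity) ?_
      have hae : ∀ᵐ x ∂μ, ‖u x‖ ≤ (n : ℝ) := by
        rw [ae_iff]
        simp only [not_le]
        exact h0
      filter_upwards [hae] with x hx
      have h0' := norm_nonneg (u x)
      have hn4 : ‖u x‖ ^ 4 ≤ ((n : ℝ)) ^ 4 := pow_le_pow_left₀ h0' hx 4
      have hn5 : ((n : ℝ)) ^ 4 ≤ ((n : ℝ) + 1) ^ 4 :=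
        pow_le_pow_left₀ (Nat.cast_nonneg n) (by linarith) 4
      nlinarith [mul_nonneg (by positivity : (0:ℝ) ≤ ((n : ℝ) + 1) ^ 4) (sq_nonneg ‖u x‖)]
    obtain ⟨f, hf2, huf2, hbad⟩ := hard_dir hu hA
    exact hbad (h f ⟨hf2, huf2⟩).2
  · rintro ⟨c, hc, hb⟩ f hf
    exact ⟨hf.2, easy_dir hu hc hb hf.1 hf.2⟩
end

section
/- With the same hypotheses, uC_φ is an n-isometry, i.e. Σ_{i=0}^{n} (-1)^i C(n,i) ‖(uC_φ)^i f‖² = 0 for all f ∈ D((uC_φ)ⁿ), if and only if Δ_{J,n}(x) = 0 for μ-almost every x. -/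
open MeasureTheory ENNReal Finset

lemma stmt8_mem2 {X : Type*} [MeasurableSpace X] {μ : Measure X} {g : X → ℂ}
    (hg : Measurable g) (h : ∫⁻ x, (‖g x‖₊ : ℝ≥0∞) ^ 2 ∂μ ≠ ∞) : MemLp g 2 μ := by
  refine ⟨hg.aestronglyMeasurable, ?_⟩
  rw [eLpNorm_eq_lintegral_rpow_enorm_toReal (by norm_num) (by norm_num)]
  simp only [ENNReal.toReal_ofNat]
  refine ENNReal.rpow_lt_top_of_nonneg (by norm_num) ?_
  rw [show ((2:ℝ)) = ((2:ℕ):ℝ) by norm_num]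
  simp_rw [ENNReal.rpow_natCast]
  exact h

lemma stmt8_mem2' {X : Type*} [MeasurableSpace X] {μ : Measure X} {g : X → ℂ}
    (hg : MemLp g 2 μ) : ∫⁻ x, (‖g x‖₊ : ℝ≥0∞) ^ 2 ∂μ ≠ ∞ := by
  have h2 := hg.2
  rw [eLpNorm_eq_lintegral_rpow_enorm_toReal (by norm_num) (by norm_num)] at h2
  simp only [ENNReal.toReal_ofNat] at h2
  intro h
  rw [show ((2:ℝ)) = ((2:ℕ):ℝ) by norm_num] at h2
  simp_rw [ENNReal.rpow_natCast] at h2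
  simp_rw [enorm_eq_nnnorm] at h2
  rw [h, ENNReal.top_rpow_of_pos (by norm_num)] at h2
  exact absurd h2 (by simp)

lemma stmt8_intsq {X : Type*} [MeasurableSpace X] {μ : Measure X} {g : X → ℂ}
    (hg : AEMeasurable g μ) :
    ∫ x, ‖g x‖ ^ 2 ∂μ = (∫⁻ x, (‖g x‖₊ : ℝ≥0∞) ^ 2 ∂μ).toReal := by
  rw [integral_eq_lintegral_of_nonneg_ae (ae_of_all _ fun x => sq_nonneg _)
    ((hg.norm.pow_const 2).aestronglyMeasurable)]
  congr 1
  refine lintegral_congr fun x => ?_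
  rw [ENNReal.ofReal_pow (norm_nonneg _), ofReal_norm, enorm_eq_nnnorm]

/-- Proposition 2.6(ii): `uC_φ` is an `n`-isometry iff `Δ_{J,n} = 0` a.e. -/
theorem stmt8
    {X : Type*} [MeasurableSpace X] (μ : Measure X) [SigmaFinite μ]
    (u : X → ℂ) (hu : Measurable u)
    (φ : X → X) (hφ : Measurable φ)
    (hns : (μ.map φ) ≪ μ)
    (J : ℕ → X → ℝ≥0∞)
    (hJ0 : J 0 = fun _ => 1)
    (hJ : ∀ i : ℕ, J (i + 1) =
      ((μ.withDensity fun x => J i x * (‖u x‖₊ : ℝ≥0∞) ^ 2).map φ).rnDeriv μ)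
    (hfin : ∀ i, ∀ᵐ x ∂μ, J i x < ∞)
    (T : (X → ℂ) → X → ℂ) (hT : T = fun f x => u x * f (φ x))
    (n : ℕ) (hn : 1 ≤ n)
    (hdense : Dense {f : Lp ℂ 2 μ |
        ∀ i ≤ n, MemLp (T^[i] (f : X → ℂ)) 2 μ}) :
    (∀ f : X → ℂ, Measurable f → (∀ i ≤ n, MemLp (T^[i] f) 2 μ) →
        ∑ i ∈ range (n + 1),
          (-1 : ℝ) ^ i * (n.choose i) * ∫ x, ‖(T^[i] f) x‖ ^ 2 ∂μ = 0) ↔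
      ∀ᵐ x ∂μ, ∑ i ∈ range (n + 1),
          (-1 : ℝ) ^ i * (n.choose i) * (J i x).toReal = 0 := by
  subst hT
  clear hdense
  have hJmeas : ∀ i, Measurable (J i) := by
    intro i; cases i with
    | zero => rw [hJ0]; exact measurable_const
    | succ i => rw [hJ i]; exact Measure.measurable_rnDeriv _ _
  -- key identity
  have key : ∀ (i : ℕ) (f : X → ℂ), Measurable f →
      ∫⁻ x, (‖((fun f x => u x * f (φ x))^[i] f) x‖₊ : ℝ≥0∞) ^ 2 ∂μ
        = ∫⁻ x, J i x * (‖f x‖₊ : ℝ≥0∞) ^ 2 ∂μ := by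
    intro i
    induction i with
    | zero => intro f hf; simp [hJ0]
    | succ i ih =>
      intro f hf
      have hTf : Measurable fun x => u x * f (φ x) := hu.mul (hf.comp hφ)
      rw [Function.iterate_succ_apply, ih _ hTf]
      set ν := μ.withDensity (fun x => J i x * (‖u x‖₊ : ℝ≥0∞) ^ 2) with hνdef
      have hν : ν.map φ ≪ μ := ((withDensity_absolutelyContinuous μ _).map hφ).trans hns
      have hwd : μ.withDensity (J (i+1)) = ν.map φ := by
        rw [hJ i]; exact Measure.withDensity_rnDeriv_eq _ _ hν
      have hfm : Measurable fun x => (‖f x‖₊ : ℝ≥0∞) ^ 2 :=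
        (hf.nnnorm.coe_nnreal_ennreal).pow_const 2
      calc ∫⁻ x, J i x * (‖u x * f (φ x)‖₊ : ℝ≥0∞) ^ 2 ∂μ
          = ∫⁻ x, (J i x * (‖u x‖₊ : ℝ≥0∞) ^ 2) * (‖f (φ x)‖₊ : ℝ≥0∞) ^ 2 ∂μ := by
            refine lintegral_congr fun x => ?_
            rw [nnnorm_mul]; push_cast; ring
        _ = ∫⁻ x, (‖f (φ x)‖₊ : ℝ≥0∞) ^ 2 ∂ν := by
            have hfφ : Measurable fun x => (‖f (φ x)‖₊ : ℝ≥0∞) ^ 2 := hfm.comp hφ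
            rw [hνdef, lintegral_withDensity_eq_lintegral_mul μ
              (by exact (hJmeas i).mul ((hu.nnnorm.coe_nnreal_ennreal).pow_const 2) :
                Measurable fun x => J i x * (‖u x‖₊ : ℝ≥0∞) ^ 2) hfφ]
            rfl
        _ = ∫⁻ x, (‖f x‖₊ : ℝ≥0∞) ^ 2 ∂(ν.map φ) := (lintegral_map hfm hφ).symm
        _ = ∫⁻ x, J (i+1) x * (‖f x‖₊ : ℝ≥0∞) ^ 2 ∂μ := by
            rw [← hwd, lintegral_withDensity_eq_lintegral_mul μ (hJmeas (i+1)) hfm]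
            rfl
  have hTmeas : ∀ (i : ℕ) (f : X → ℂ), Measurable f →
      Measurable ((fun f x => u x * f (φ x))^[i] f) := by
    intro i
    induction i with
    | zero => intro f hf; simpa using hf
    | succ i ih =>
      intro f hf
      rw [Function.iterate_succ_apply]
      exact ih _ (hu.mul (hf.comp hφ))
  constructor
  · intro H
    set S : X → ℝ := fun x => ∑ i ∈ range (n + 1),
        (-1 : ℝ) ^ i * (n.choose i) * (J i x).toReal with hSdef
    have hSmeas : Measurable S := by
      apply Finset.measurable_sum
      intro i _
      exact ((hJmeas i).ennreal_toReal).const_mul _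
    set B : ℕ → Set X := fun m => {x | ∀ i ∈ range (n + 1), J i x ≤ (m : ℝ≥0∞)} with hBdef
    have hBmeas : ∀ m, MeasurableSet (B m) := by
      intro m
      have : B m = ⋂ i ∈ range (n + 1), {x | J i x ≤ (m : ℝ≥0∞)} := by
        ext x; simp [hBdef]
      rw [this]
      exact Finset.measurableSet_biInter _
        (fun i _ => measurableSet_le (hJmeas i) measurable_const)
    -- main integral claim
    have claimInt : ∀ (E : Set X), MeasurableSet E → μ E < ∞ → ∀ m : ℕ,
        (∀ x ∈ E, ∀ i ∈ range (n + 1), J i x ≤ (m : ℝ≥0∞)) →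
        Integrable S (μ.restrict E) ∧ ∫ x in E, S x ∂μ = 0 := by
      intro E hE hEfin m hEb
      set f : X → ℂ := E.indicator (fun _ => (1 : ℂ)) with hfdef
      have hfmeas : Measurable f := measurable_const.indicator hE
      have hind : ∀ x, (‖f x‖₊ : ℝ≥0∞) ^ 2 = E.indicator (fun _ => (1 : ℝ≥0∞)) x := by
        intro x; by_cases hx : x ∈ E <;> simp [hfdef, hx]
      have hlin : ∀ i, ∫⁻ x, J i x * (‖f x‖₊ : ℝ≥0∞) ^ 2 ∂μ = ∫⁻ x in E, J i x ∂μ := by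
        intro i
        rw [← lintegral_indicator hE (J i)]
        refine lintegral_congr fun x => ?_
        by_cases hx : x ∈ E <;> simp [hind, hx]
      have hfinlin : ∀ i ∈ range (n + 1), ∫⁻ x in E, J i x ∂μ ≠ ∞ := by
        intro i hi
        refine ne_of_lt (lt_of_le_of_lt (?_ : _ ≤ (m : ℝ≥0∞) * μ E) ?_)
        · calc ∫⁻ x in E, J i x ∂μ ≤ ∫⁻ _ in E, (m : ℝ≥0∞) ∂μ :=
                setLIntegral_mono measurable_const (fun x hx => hEb x hx i hi)
            _ = (m : ℝ≥0∞) * μ E := by rw [setLIntegral_const]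
        · exact ENNReal.mul_lt_top (by simp) hEfin
      have hmem : ∀ i ≤ n, MemLp ((fun f x => u x * f (φ x))^[i] f) 2 μ := by
        intro i hi
        refine stmt8_mem2 (hTmeas i f hfmeas) ?_
        rw [key i f hfmeas, hlin i]
        exact hfinlin i (mem_range.2 (Nat.lt_succ_of_le hi))
      have hH := H f hfmeas hmem
      have hval : ∀ i ∈ range (n + 1),
          ∫ x, ‖((fun f x => u x * f (φ x))^[i] f) x‖ ^ 2 ∂μ
            = (∫⁻ x in E, J i x ∂μ).toReal := by
        intro i _
        rw [stmt8_intsq (hTmeas i f hfmeas).aemeasurable, key i f hfmeas, hlin i]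
      have hJint : ∀ i ∈ range (n + 1),
          Integrable (fun x => (J i x).toReal) (μ.restrict E) := by
        intro i hi
        exact integrable_toReal_of_lintegral_ne_top ((hJmeas i).aemeasurable) (hfinlin i hi)
      have hJval : ∀ i ∈ range (n + 1),
          ∫ x in E, (J i x).toReal ∂μ = (∫⁻ x in E, J i x ∂μ).toReal := by
        intro i hi
        apply integral_toReal ((hJmeas i).aemeasurable)
        refine (ae_restrict_iff' hE).2 (ae_of_all _ fun x hx => ?_)
        exact lt_of_le_of_lt (hEb x hx i hi) (by simp)
      have hSint : Integrable S (μ.restrict E) := by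
        apply integrable_finset_sum
        intro i hi
        exact (hJint i hi).const_mul _
      refine ⟨hSint, ?_⟩
      rw [hSdef]
      rw [integral_finset_sum _ (fun i hi => (hJint i hi).const_mul _)]
      calc ∑ i ∈ range (n + 1), ∫ x in E, (-1:ℝ)^i * (n.choose i) * (J i x).toReal ∂μ
          = ∑ i ∈ range (n + 1), (-1:ℝ)^i * (n.choose i) *
              ∫ x, ‖((fun f x => u x * f (φ x))^[i] f) x‖ ^ 2 ∂μ := by
            refine Finset.sum_congr rfl fun i hi => ?_
            rw [integral_const_mul, hJval i hi, hval i hi]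
        _ = 0 := hH
    -- null claim
    have claimNull : ∀ (A : Set X), MeasurableSet A →
        ((∀ x ∈ A, 0 < S x) ∨ (∀ x ∈ A, S x < 0)) → ∀ k m : ℕ,
        μ (A ∩ spanningSets μ k ∩ B m) = 0 := by
      intro A hA hsgn k m
      set E := A ∩ spanningSets μ k ∩ B m with hEdef
      have hE : MeasurableSet E :=
        (hA.inter (measurableSet_spanningSets μ k)).inter (hBmeas m)
      have hEfin : μ E < ∞ :=
        lt_of_le_of_lt (measure_mono (fun x hx => hx.1.2)) (measure_spanningSets_lt_top μ k)
      have hEb : ∀ x ∈ E, ∀ i ∈ range (n + 1), J i x ≤ (m : ℝ≥0∞) := fun x hx => hx.2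
      obtain ⟨hSint, hS0⟩ := claimInt E hE hEfin m hEb
      have hEA : ∀ x ∈ E, x ∈ A := fun x hx => hx.1.1
      have hae0 : ∀ᵐ x ∂(μ.restrict E), S x = 0 := by
        rcases hsgn with hpos | hneg
        · have h1 : 0 ≤ᵐ[μ.restrict E] S :=
            (ae_restrict_iff' hE).2 (ae_of_all _ fun x hx => (hpos x (hEA x hx)).le)
          have := (integral_eq_zero_iff_of_nonneg_ae h1 hSint).1 hS0
          filter_upwards [this] with x hx using hx
        · have h1 : 0 ≤ᵐ[μ.restrict E] (fun x => -S x) :=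
            (ae_restrict_iff' hE).2 (ae_of_all _ fun x hx => neg_nonneg.2 (hneg x (hEA x hx)).le)
          have h2 : ∫ x in E, -S x ∂μ = 0 := by rw [integral_neg, hS0, neg_zero]
          have := (integral_eq_zero_iff_of_nonneg_ae h1 hSint.neg).1 h2
          filter_upwards [this] with x hx
          simpa using hx
      have hne : ∀ x ∈ E, S x ≠ 0 := by
        intro x hx
        rcases hsgn with hpos | hneg
        · exact (hpos x (hEA x hx)).ne'
        · exact (hneg x (hEA x hx)).ne
      have hfalse : ∀ᵐ x ∂(μ.restrict E), False := by
        filter_upwards [hae0, ae_restrict_mem hE] with x h1 h2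
        exact hne x h2 h1
      have hbot : μ.restrict E = 0 := by
        rw [← MeasureTheory.ae_eq_bot, ← Filter.eventually_false_iff_eq_bot]
        exact hfalse
      calc μ E = μ.restrict E Set.univ := (Measure.restrict_apply_univ E).symm
        _ = 0 := by rw [hbot]; rfl
    -- covering argument
    have hcover : ∀ (A : Set X), MeasurableSet A →
        ((∀ x ∈ A, 0 < S x) ∨ (∀ x ∈ A, S x < 0)) → μ A = 0 := by
      intro A hA hsgn
      have hbad : μ {x | ¬ ∀ i, J i x < ∞} = 0 := (ae_all_iff.2 hfin)
      have hsub : A ⊆ (⋃ k, ⋃ m, (A ∩ spanningSets μ k ∩ B m)) ∪ {x | ¬ ∀ i, J i x < ∞} := by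
        intro x hx
        by_cases hxf : ∀ i, J i x < ∞
        · left
          have hk : ∃ k, x ∈ spanningSets μ k := by
            have := iUnion_spanningSets μ
            have hx' : x ∈ ⋃ k, spanningSets μ k := this ▸ Set.mem_univ x
            exact Set.mem_iUnion.1 hx'
          obtain ⟨k, hk⟩ := hk
          have hr : (range (n + 1)).sup (fun i => J i x) ≠ ∞ := by
            rw [← lt_top_iff_ne_top, Finset.sup_lt_iff (by simp)]
            exact fun i _ => hxf i
          obtain ⟨m, hm⟩ := ENNReal.exists_nat_gt hr
          refine Set.mem_iUnion.2 ⟨k, Set.mem_iUnion.2 ⟨m, ⟨⟨hx, hk⟩, ?_⟩⟩⟩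
          intro i hi
          exact le_trans (Finset.le_sup (f := fun j => J j x) hi) hm.le
        · right; exact hxf
      refine measure_mono_null hsub (measure_union_null ?_ hbad)
      exact measure_iUnion_null fun k => measure_iUnion_null fun m => claimNull A hA hsgn k m
    have hpos : μ {x | 0 < S x} = 0 :=
      hcover _ (measurableSet_lt measurable_const hSmeas) (Or.inl fun x hx => hx)
    have hneg : μ {x | S x < 0} = 0 :=
      hcover _ (measurableSet_lt hSmeas measurable_const) (Or.inr fun x hx => hx)
    have : μ {x | S x ≠ 0} = 0 := by
      refine measure_mono_null (fun x hx => ?_) (measure_union_null hpos hneg)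
      rcases lt_or_gt_of_ne (hx : S x ≠ 0) with h | h
      · exact Or.inr h
      · exact Or.inl h
    exact this
  · intro h f hf hmem
    set G : ℕ → X → ℝ≥0∞ := fun i x => J i x * (‖f x‖₊ : ℝ≥0∞) ^ 2 with hGdef
    have hGmeas : ∀ i, Measurable (G i) :=
      fun i => (hJmeas i).mul ((hf.nnnorm.coe_nnreal_ennreal).pow_const 2)
    have hGfin : ∀ i ∈ range (n + 1), ∫⁻ x, G i x ∂μ ≠ ∞ := by
      intro i hi
      rw [hGdef, ← key i f hf]
      exact stmt8_mem2' (hmem i (Nat.lt_succ_iff.1 (mem_range.1 hi)))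
    have hGae : ∀ i, ∀ᵐ x ∂μ, G i x < ∞ := by
      intro i
      filter_upwards [hfin i] with x hx
      exact ENNReal.mul_lt_top hx (ENNReal.pow_lt_top ENNReal.coe_lt_top)
    have hGint : ∀ i ∈ range (n + 1), Integrable (fun x => (G i x).toReal) μ :=
      fun i hi => integrable_toReal_of_lintegral_ne_top (hGmeas i).aemeasurable (hGfin i hi)
    have hval : ∀ i ∈ range (n + 1),
        ∫ x, ‖((fun f x => u x * f (φ x))^[i] f) x‖ ^ 2 ∂μ = ∫ x, (G i x).toReal ∂μ := by
      intro i hi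
      rw [stmt8_intsq (hTmeas i f hf).aemeasurable, key i f hf,
        ← integral_toReal (hGmeas i).aemeasurable (hGae i)]
    calc ∑ i ∈ range (n + 1), (-1:ℝ)^i * (n.choose i) *
          ∫ x, ‖((fun f x => u x * f (φ x))^[i] f) x‖ ^ 2 ∂μ
        = ∫ x, ∑ i ∈ range (n + 1), (-1:ℝ)^i * (n.choose i) * (G i x).toReal ∂μ := by
          rw [integral_finset_sum _ (fun i hi => (hGint i hi).const_mul _)]
          refine Finset.sum_congr rfl fun i hi => ?_
          rw [integral_const_mul, hval i hi]
      _ = 0 := by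
          have hzero : ∀ᵐ x ∂μ,
              ∑ i ∈ range (n + 1), (-1:ℝ)^i * (n.choose i) * (G i x).toReal = 0 := by
            filter_upwards [h, ae_all_iff.2 hfin] with x hx hxf
            have : ∀ i ∈ range (n + 1),
                (-1:ℝ)^i * (n.choose i) * (G i x).toReal
                  = ((-1:ℝ)^i * (n.choose i) * (J i x).toReal) * ‖f x‖ ^ 2 := by
              intro i _
              rw [hGdef]
              simp only [ENNReal.toReal_mul]
              rw [ENNReal.toReal_pow]
              simp only [coe_toReal, coe_nnnorm]
              ring
            rw [Finset.sum_congr rfl this, ← Finset.sum_mul, hx, zero_mul]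
          rw [integral_congr_ae hzero, integral_zero]
end

section
/- Assume D((uC_φ)²) is dense in L²(μ), J_1 and J_2 are finite a.e., and uC_φ is 2-expansive (i.e. ‖f‖² − 2‖uC_φ f‖² + ‖(uC_φ)² f‖² ≤ 0 for all f ∈ D((uC_φ)²)). Then J_2 ≤ 2J_1 − 1 μ-a.e., and consequently uC_φ maps its domain into itself. -/
open MeasureTheory ENNReal

section aux
variable {X : Type*} [MeasurableSpace X] {μ : Measure X}

lemma aux_lintegral_lt_top_of_memL2 {f : X → ℂ} (h : MemLp f 2 μ) :
    ∫⁻ x, (‖f x‖₊ : ℝ≥0∞) ^ 2 ∂μ < ∞ := by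
  have := lintegral_rpow_enorm_lt_top_of_eLpNorm_lt_top (f := f) (p := 2)
    two_ne_zero (by norm_num) h.2
  have h2 : (2 : ℝ≥0∞).toReal = ((2 : ℕ) : ℝ) := by norm_num
  rw [h2] at this
  simpa [ENNReal.rpow_natCast, enorm_eq_nnnorm] using this

lemma aux_memL2 {f : X → ℂ} (hm : AEStronglyMeasurable f μ)
    (h : ∫⁻ x, (‖f x‖₊ : ℝ≥0∞) ^ 2 ∂μ < ∞) : MemLp f 2 μ := by
  refine ⟨hm, ?_⟩
  rw [eLpNorm_lt_top_iff_lintegral_rpow_enorm_lt_top two_ne_zero (by norm_num)]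
  have h2 : (2 : ℝ≥0∞).toReal = ((2 : ℕ) : ℝ) := by norm_num
  rw [h2]
  simpa [ENNReal.rpow_natCast, enorm_eq_nnnorm] using h

lemma aux_integral_sq_eq {f : X → ℂ} (hm : AEStronglyMeasurable f μ) :
    ∫ x, ‖f x‖ ^ 2 ∂μ = (∫⁻ x, (‖f x‖₊ : ℝ≥0∞) ^ 2 ∂μ).toReal := by
  rw [integral_eq_lintegral_of_nonneg_ae
    (Filter.Eventually.of_forall fun x => sq_nonneg _)
    ((hm.norm.pow 2))]
  congr 1
  refine lintegral_congr fun x => ?_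
  rw [ENNReal.ofReal_pow (norm_nonneg _), ofReal_norm_eq_enorm, enorm_eq_nnnorm]

end aux

/-- Proposition 2.9(i): if `uC_φ` is 2-expansive then `J₂ ≤ 2J₁ − 1` a.e.
(equivalently `J₂ + 1 ≤ 2J₁`) and `uC_φ` leaves its domain invariant. -/
theorem stmt10
    {X : Type*} [MeasurableSpace X] (μ : Measure X) [SigmaFinite μ]
    (u : X → ℂ) (hu : Measurable u)
    (φ : X → X) (hφ : Measurable φ)
    (hns : (μ.map φ) ≪ μ)
    (J : ℕ → X → ℝ≥0∞)
    (hJ0 : J 0 = fun _ => 1)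
    (hJ : ∀ i : ℕ, J (i + 1) =
      ((μ.withDensity fun x => J i x * (‖u x‖₊ : ℝ≥0∞) ^ 2).map φ).rnDeriv μ)
    (hfin : ∀ i, ∀ᵐ x ∂μ, J i x < ∞)
    (T : (X → ℂ) → X → ℂ) (hT : T = fun f x => u x * f (φ x))
    (hdense : Dense {f : Lp ℂ 2 μ |
        ∀ i ≤ 2, MemLp (T^[i] (f : X → ℂ)) 2 μ})
    (hexp : ∀ f : X → ℂ, Measurable f → (∀ i ≤ 2, MemLp (T^[i] f) 2 μ) →
      (∫ x, ‖f x‖ ^ 2 ∂μ) - 2 * (∫ x, ‖T f x‖ ^ 2 ∂μ)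
        + (∫ x, ‖T (T f) x‖ ^ 2 ∂μ) ≤ 0)
    (D : Set (X → ℂ))
    (hD : D = {f | MemLp f 2 μ ∧ MemLp (T f) 2 μ}) :
    (∀ᵐ x ∂μ, J 2 x + 1 ≤ 2 * J 1 x) ∧ ∀ f ∈ D, T f ∈ D := by
  -- measurability of the J's
  have hJm : ∀ i, Measurable (J i) := by
    rintro (_ | i)
    · rw [hJ0]; exact measurable_const
    · rw [hJ i]; exact Measure.measurable_rnDeriv _ _
  -- the key change-of-variables identity
  have key : ∀ i, ∀ g : X → ℝ≥0∞, Measurable g →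
      ∫⁻ x, J (i + 1) x * g x ∂μ
        = ∫⁻ x, (J i x * (‖u x‖₊ : ℝ≥0∞) ^ 2) * g (φ x) ∂μ := by
    intro i g hg
    have hρm : Measurable fun x => J i x * (‖u x‖₊ : ℝ≥0∞) ^ 2 :=
      (hJm i).mul (hu.nnnorm.coe_nnreal_ennreal.pow_const 2)
    have hac : (μ.withDensity fun x => J i x * (‖u x‖₊ : ℝ≥0∞) ^ 2).map φ ≪ μ := by
      refine Measure.AbsolutelyContinuous.mk fun s hs hμs => ?_
      rw [Measure.map_apply hφ hs]
      have h1 : (μ.map φ) s = 0 := hns hμs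
      rw [Measure.map_apply hφ hs] at h1
      exact (withDensity_absolutelyContinuous μ _) h1
    have hν : μ.withDensity (J (i + 1))
        = (μ.withDensity fun x => J i x * (‖u x‖₊ : ℝ≥0∞) ^ 2).map φ := by
      rw [hJ i]; exact Measure.withDensity_rnDeriv_eq _ _ hac
    have e1 : ∫⁻ x, J (i + 1) x * g x ∂μ = ∫⁻ x, g x ∂(μ.withDensity (J (i + 1))) := by
      rw [lintegral_withDensity_eq_lintegral_mul μ (hJm (i + 1)) hg]; rfl
    have e2 : (∫⁻ x, g x ∂((μ.withDensity fun x => J i x * (‖u x‖₊ : ℝ≥0∞) ^ 2).map φ))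
        = ∫⁻ x, g (φ x) ∂(μ.withDensity fun x => J i x * (‖u x‖₊ : ℝ≥0∞) ^ 2) :=
      lintegral_map hg hφ
    have e3 : (∫⁻ x, g (φ x) ∂(μ.withDensity fun x => J i x * (‖u x‖₊ : ℝ≥0∞) ^ 2))
        = ∫⁻ x, (J i x * (‖u x‖₊ : ℝ≥0∞) ^ 2) * g (φ x) ∂μ :=
      lintegral_withDensity_eq_lintegral_mul μ hρm (hg.comp hφ)
    rw [e1, hν, e2, e3]
  -- norm identities
  have hTnn : ∀ f : X → ℂ, ∀ x, (‖T f x‖₊ : ℝ≥0∞) ^ 2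
      = (‖u x‖₊ : ℝ≥0∞) ^ 2 * (‖f (φ x)‖₊ : ℝ≥0∞) ^ 2 := by
    intro f x
    rw [hT]
    simp [nnnorm_mul, mul_pow]
  have hsqm : ∀ f : X → ℂ, Measurable f →
      Measurable fun x => (‖f x‖₊ : ℝ≥0∞) ^ 2 := fun f hf =>
    hf.nnnorm.coe_nnreal_ennreal.pow_const 2
  have idB : ∀ f : X → ℂ, Measurable f →
      ∫⁻ x, (‖T f x‖₊ : ℝ≥0∞) ^ 2 ∂μ = ∫⁻ x, J 1 x * (‖f x‖₊ : ℝ≥0∞) ^ 2 ∂μ := by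
    intro f hf
    rw [key 0 _ (hsqm f hf)]
    refine lintegral_congr fun x => ?_
    rw [hTnn f x, hJ0]
    ring
  have idC : ∀ f : X → ℂ, Measurable f →
      ∫⁻ x, J 1 x * (‖T f x‖₊ : ℝ≥0∞) ^ 2 ∂μ
        = ∫⁻ x, J 2 x * (‖f x‖₊ : ℝ≥0∞) ^ 2 ∂μ := by
    intro f hf
    rw [key 1 _ (hsqm f hf)]
    refine lintegral_congr fun x => ?_
    rw [hTnn f x]
    ring
  have hTm : ∀ f : X → ℂ, Measurable f → Measurable (T f) := by
    intro f hf; rw [hT]; exact hu.mul (hf.comp hφ)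
  have idD : ∀ f : X → ℂ, Measurable f →
      ∫⁻ x, (‖T (T f) x‖₊ : ℝ≥0∞) ^ 2 ∂μ = ∫⁻ x, J 2 x * (‖f x‖₊ : ℝ≥0∞) ^ 2 ∂μ := by
    intro f hf
    rw [idB _ (hTm f hf), idC f hf]
  -- Part 1
  have hA : ∀ n : ℕ, MeasurableSet {x | J 1 x ≤ (n : ℝ≥0∞) ∧ J 2 x ≤ (n : ℝ≥0∞)} :=
    fun n => ((hJm 1) measurableSet_Iic).inter ((hJm 2) measurableSet_Iic)
  have hae : ∀ᵐ x ∂μ, J 2 x + 1 ≤ 2 * J 1 x := by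
    have hres : ∀ n : ℕ, ∀ᵐ x ∂(μ.restrict {x | J 1 x ≤ (n : ℝ≥0∞) ∧ J 2 x ≤ (n : ℝ≥0∞)}),
        J 2 x + 1 ≤ 2 * J 1 x := by
      intro n
      set A := {x | J 1 x ≤ (n : ℝ≥0∞) ∧ J 2 x ≤ (n : ℝ≥0∞)} with hAdef
      refine ae_le_of_forall_setLIntegral_le_of_sigmaFinite
        ((hJm 2).add measurable_const) fun s hs hμs => ?_
      rw [Measure.restrict_restrict hs]
      rw [Measure.restrict_apply hs] at hμs
      set E := s ∩ A with hE
      have hEm : MeasurableSet E := hs.inter (hA n)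
      have hEfin : μ E < ∞ := hμs
      -- indicator function
      set f : X → ℂ := E.indicator fun _ => (1 : ℂ) with hfdef
      have hfm : Measurable f := (measurable_const.indicator hEm)
      have hfsq : ∀ x, (‖f x‖₊ : ℝ≥0∞) ^ 2 = E.indicator (fun _ => (1 : ℝ≥0∞)) x := by
        intro x
        by_cases hx : x ∈ E <;> simp [hfdef, Set.indicator_apply, hx]
      have hN0 : ∫⁻ x, (‖f x‖₊ : ℝ≥0∞) ^ 2 ∂μ = μ E := by
        simp_rw [hfsq]
        rw [lintegral_indicator hEm]
        simp
      have hN1 : ∫⁻ x, (‖T f x‖₊ : ℝ≥0∞) ^ 2 ∂μ = ∫⁻ x in E, J 1 x ∂μ := by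
        rw [idB f hfm]
        simp_rw [hfsq]
        rw [← lintegral_indicator hEm]
        refine lintegral_congr fun x => ?_
        by_cases hx : x ∈ E <;> simp [Set.indicator_apply, hx]
      have hN2 : ∫⁻ x, (‖T (T f) x‖₊ : ℝ≥0∞) ^ 2 ∂μ = ∫⁻ x in E, J 2 x ∂μ := by
        rw [idD f hfm]
        simp_rw [hfsq]
        rw [← lintegral_indicator hEm]
        refine lintegral_congr fun x => ?_
        by_cases hx : x ∈ E <;> simp [Set.indicator_apply, hx]
      have hJ1bdd : ∫⁻ x in E, J 1 x ∂μ ≤ (n : ℝ≥0∞) * μ E := by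
        calc ∫⁻ x in E, J 1 x ∂μ ≤ ∫⁻ _ in E, (n : ℝ≥0∞) ∂μ :=
              setLIntegral_mono measurable_const fun x hx => hx.2.1
          _ = (n : ℝ≥0∞) * μ E := by rw [setLIntegral_const]
      have hJ2bdd : ∫⁻ x in E, J 2 x ∂μ ≤ (n : ℝ≥0∞) * μ E := by
        calc ∫⁻ x in E, J 2 x ∂μ ≤ ∫⁻ _ in E, (n : ℝ≥0∞) ∂μ :=
              setLIntegral_mono measurable_const fun x hx => hx.2.2
          _ = (n : ℝ≥0∞) * μ E := by rw [setLIntegral_const]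
      have hnE : (n : ℝ≥0∞) * μ E < ∞ := ENNReal.mul_lt_top (by simp) hEfin
      have hJ1fin : ∫⁻ x in E, J 1 x ∂μ < ∞ := lt_of_le_of_lt hJ1bdd hnE
      have hJ2fin : ∫⁻ x in E, J 2 x ∂μ < ∞ := lt_of_le_of_lt hJ2bdd hnE
      -- memℒp conditions
      have hmem : ∀ i ≤ 2, MemLp (T^[i] f) 2 μ := by
        intro i hi
        interval_cases i
        · show MemLp f 2 μ
          exact aux_memL2 hfm.aestronglyMeasurable (by rw [hN0]; exact hEfin)
        · show MemLp (T f) 2 μ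
          exact aux_memL2 (hTm f hfm).aestronglyMeasurable (by rw [hN1]; exact hJ1fin)
        · show MemLp (T (T f)) 2 μ
          exact aux_memL2 (hTm _ (hTm f hfm)).aestronglyMeasurable
            (by rw [hN2]; exact hJ2fin)
      have hexp' := hexp f hfm hmem
      rw [aux_integral_sq_eq hfm.aestronglyMeasurable,
        aux_integral_sq_eq (hTm f hfm).aestronglyMeasurable,
        aux_integral_sq_eq (hTm _ (hTm f hfm)).aestronglyMeasurable,
        hN0, hN1, hN2] at hexp'
      -- conclude
      have hgoal : ∫⁻ x in E, (J 2 x + 1) ∂μ ≤ ∫⁻ x in E, 2 * J 1 x ∂μ := by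
        rw [lintegral_add_right _ measurable_const, setLIntegral_const,
          lintegral_const_mul 2 (hJm 1)]
        have hlhs : (∫⁻ x in E, J 2 x ∂μ) + 1 * μ E ≠ ∞ :=
          (ENNReal.add_lt_top.2 ⟨hJ2fin, by simpa using hEfin⟩).ne
        have hrhs : 2 * ∫⁻ x in E, J 1 x ∂μ ≠ ∞ :=
          (ENNReal.mul_lt_top (by simp) hJ1fin).ne
        rw [← ENNReal.toReal_le_toReal hlhs hrhs]
        rw [ENNReal.toReal_add hJ2fin.ne (by simpa using hEfin.ne),
          ENNReal.toReal_mul, ENNReal.toReal_mul]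
        simp only [ENNReal.toReal_one, ENNReal.toReal_ofNat, one_mul]
        linarith
      exact hgoal
    have hres' : ∀ n : ℕ, ∀ᵐ x ∂μ,
        x ∈ {x | J 1 x ≤ (n : ℝ≥0∞) ∧ J 2 x ≤ (n : ℝ≥0∞)} → J 2 x + 1 ≤ 2 * J 1 x :=
      fun n => (ae_restrict_iff' (hA n)).mp (hres n)
    filter_upwards [hfin 1, hfin 2, ae_all_iff.mpr hres'] with x h1 h2 hall
    obtain ⟨n, hn⟩ := ENNReal.exists_nat_gt h1.ne
    obtain ⟨m, hm⟩ := ENNReal.exists_nat_gt h2.ne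
    exact hall (max n m) ⟨hn.le.trans (by exact_mod_cast Nat.cast_le.2 (le_max_left n m)),
      hm.le.trans (by exact_mod_cast Nat.cast_le.2 (le_max_right n m))⟩
  refine ⟨hae, ?_⟩
  -- Part 2: domain invariance
  intro f hf
  rw [hD] at hf ⊢
  obtain ⟨hf1, hf2⟩ := hf
  refine ⟨hf2, ?_⟩
  -- measurable representative
  obtain ⟨g, hgm, hfg⟩ : ∃ g : X → ℂ, Measurable g ∧ f =ᵐ[μ] g :=
    ⟨hf1.1.mk f, hf1.1.stronglyMeasurable_mk.measurable, hf1.1.ae_eq_mk⟩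
  have qmp : Measure.QuasiMeasurePreserving φ μ μ := ⟨hφ, hns⟩
  have hTcong : ∀ a b : X → ℂ, a =ᵐ[μ] b → T a =ᵐ[μ] T b := by
    intro a b hab
    filter_upwards [qmp.ae_eq hab] with x hx
    rw [hT]
    exact congrArg (fun z => u x * z) hx
  have hTfg : T f =ᵐ[μ] T g := hTcong f g hfg
  have hTTfg : T (T f) =ᵐ[μ] T (T g) := hTcong _ _ hTfg
  have hTTgm : Measurable (T (T g)) := hTm _ (hTm g hgm)
  refine MemLp.ae_eq hTTfg.symm (aux_memL2 hTTgm.aestronglyMeasurable ?_)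
  rw [idD g hgm]
  have hTgfin : ∫⁻ x, (‖T g x‖₊ : ℝ≥0∞) ^ 2 ∂μ < ∞ := by
    have h0 := aux_lintegral_lt_top_of_memL2 hf2
    have heq : (fun x => (‖T f x‖₊ : ℝ≥0∞) ^ 2) =ᵐ[μ] fun x => (‖T g x‖₊ : ℝ≥0∞) ^ 2 := by
      filter_upwards [hTfg] with x hx; rw [hx]
    rwa [lintegral_congr_ae heq] at h0
  calc ∫⁻ x, J 2 x * (‖g x‖₊ : ℝ≥0∞) ^ 2 ∂μ
      ≤ ∫⁻ x, 2 * J 1 x * (‖g x‖₊ : ℝ≥0∞) ^ 2 ∂μ := by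
        refine lintegral_mono_ae ?_
        filter_upwards [hae] with x hx
        exact mul_le_mul_left (le_trans le_self_add hx) _
    _ = 2 * ∫⁻ x, J 1 x * (‖g x‖₊ : ℝ≥0∞) ^ 2 ∂μ := by
        rw [← lintegral_const_mul 2 (f := fun x => J 1 x * (‖g x‖₊ : ℝ≥0∞) ^ 2)
          ((hJm 1).mul (hsqm g hgm))]
        exact lintegral_congr fun x => by ring
    _ = 2 * ∫⁻ x, (‖T g x‖₊ : ℝ≥0∞) ^ 2 ∂μ := by rw [idB g hgm]
    _ < ∞ := ENNReal.mul_lt_top (by simp) hTgfin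
end

section
/- Under the hypotheses that D((uC_φ)²) is dense in L²(μ) and uC_φ is 2-expansive, the sequence (J_k) is nondecreasing: J_k ≥ J_{k-1} μ-a.e. for all k ≥ 1. -/
open MeasureTheory ENNReal

lemma aux_concave_seq_mono (a : ℕ → ℝ) (h0 : ∀ k, 0 ≤ a k)
    (hc : ∀ k, a k + a (k + 2) ≤ 2 * a (k + 1)) : ∀ k, a k ≤ a (k + 1) := by
  intro k
  by_contra h
  push_neg at h
  set d := a (k + 1) - a k with hd
  have hdneg : d < 0 := by simp only [hd]; linarith
  have step : ∀ j, a (k + 1 + j) - a (k + j) ≤ d := by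
    intro j
    induction j with
    | zero => simp [hd]
    | succ n ih =>
      have h2 := hc (k + n)
      have e1 : k + 1 + (n + 1) = k + n + 2 := by ring
      have e2 : k + (n + 1) = k + n + 1 := by ring
      have e3 : k + 1 + n = k + n + 1 := by ring
      rw [e1, e2]
      rw [e3] at ih
      linarith
  have bound : ∀ j, a (k + 1 + j) ≤ a (k + 1) + j * d := by
    intro j
    induction j with
    | zero => simp
    | succ n ih =>
      have hs := step (n + 1)
      have e2 : k + (n + 1) = k + 1 + n := by ring
      rw [e2] at hs
      push_cast
      linarith
  obtain ⟨j, hj⟩ := exists_nat_gt (a (k + 1) / (-d))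
  have h1 := bound j
  have h2 := h0 (k + 1 + j)
  have hdpos : 0 < -d := by linarith
  have h3 : a (k + 1) < j * (-d) := (div_lt_iff₀ hdpos).mp hj
  nlinarith

lemma aux_mem2 {X : Type*} [MeasurableSpace X] {μ : Measure X} {f : X → ℂ} (hf : Measurable f)
    (h : (∫⁻ x, (‖f x‖₊ : ℝ≥0∞) ^ 2 ∂μ) < ∞) : MemLp f 2 μ := by
  refine ⟨hf.aestronglyMeasurable, ?_⟩
  rw [eLpNorm_eq_lintegral_rpow_enorm_toReal two_ne_zero ENNReal.ofNat_ne_top]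
  refine ENNReal.rpow_lt_top_of_nonneg (by positivity) ?_
  have : ∀ x : X, (‖f x‖₊ : ℝ≥0∞) ^ ((2 : ℝ≥0∞).toReal) = (‖f x‖₊ : ℝ≥0∞) ^ 2 := by
    intro x
    rw [ENNReal.toReal_ofNat]
    rw [show ((2:ℝ) = ((2:ℕ):ℝ)) by norm_num, ENNReal.rpow_natCast]
  simp_rw [enorm_eq_nnnorm, this]
  exact h.ne

lemma aux_intsq {X : Type*} [MeasurableSpace X] {μ : Measure X} {f : X → ℂ}
    (hf : AEStronglyMeasurable f μ) :
    ∫ x, ‖f x‖ ^ 2 ∂μ = (∫⁻ x, (‖f x‖₊ : ℝ≥0∞) ^ 2 ∂μ).toReal := by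
  rw [integral_eq_lintegral_of_nonneg_ae (Filter.Eventually.of_forall fun x => by positivity)
    ((hf.aemeasurable.norm.pow_const 2).aestronglyMeasurable)]
  congr 1
  refine lintegral_congr fun x => ?_
  rw [← enorm_eq_nnnorm, ← ofReal_norm_eq_enorm, ← ENNReal.ofReal_pow (norm_nonneg _)]

/-- Proposition 2.9(ii): if `D((uC_φ)²)` is dense and `uC_φ` is 2-expansive,
then `J_k ≥ J_{k-1}` a.e. for all `k ≥ 1`. -/
theorem stmt11
    {X : Type*} [MeasurableSpace X] (μ : Measure X) [SigmaFinite μ]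
    (u : X → ℂ) (hu : Measurable u)
    (φ : X → X) (hφ : Measurable φ)
    (hns : (μ.map φ) ≪ μ)
    (J : ℕ → X → ℝ≥0∞)
    (hJ0 : J 0 = fun _ => 1)
    (hJ : ∀ i : ℕ, J (i + 1) =
      ((μ.withDensity fun x => J i x * (‖u x‖₊ : ℝ≥0∞) ^ 2).map φ).rnDeriv μ)
    (hfin : ∀ i, ∀ᵐ x ∂μ, J i x < ∞)
    (T : (X → ℂ) → X → ℂ) (hT : T = fun f x => u x * f (φ x))
    (hdense : Dense {f : Lp ℂ 2 μ |
        ∀ i ≤ 2, MemLp (T^[i] (f : X → ℂ)) 2 μ})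
    (hexp : ∀ f : X → ℂ, Measurable f → (∀ i ≤ 2, MemLp (T^[i] f) 2 μ) →
      (∫ x, ‖f x‖ ^ 2 ∂μ) - 2 * (∫ x, ‖T f x‖ ^ 2 ∂μ)
        + (∫ x, ‖T (T f) x‖ ^ 2 ∂μ) ≤ 0) :
    ∀ k : ℕ, 1 ≤ k → ∀ᵐ x ∂μ, J (k - 1) x ≤ J k x := by
  -- measurability of the J's
  have hJm : ∀ i, Measurable (J i) := by
    intro i
    cases i with
    | zero => rw [hJ0]; exact measurable_const
    | succ n => rw [hJ n]; exact Measure.measurable_rnDeriv _ _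
  have hum : Measurable fun x => (‖u x‖₊ : ℝ≥0∞) ^ 2 :=
    (measurable_coe_nnreal_ennreal.comp hu.nnnorm).pow_const 2
  have hw : ∀ i, Measurable fun x => J i x * (‖u x‖₊ : ℝ≥0∞) ^ 2 := fun i => (hJm i).mul hum
  -- change of variables
  have COV : ∀ (i : ℕ) (g : X → ℝ≥0∞), Measurable g →
      ∫⁻ x, g x * J (i + 1) x ∂μ
        = ∫⁻ x, g (φ x) * (J i x * (‖u x‖₊ : ℝ≥0∞) ^ 2) ∂μ := by
    intro i g hg
    set ν := μ.withDensity fun x => J i x * (‖u x‖₊ : ℝ≥0∞) ^ 2 with hν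
    have hac : ν.map φ ≪ μ :=
      ((withDensity_absolutelyContinuous μ _).map hφ).trans hns
    have h1 : μ.withDensity (J (i + 1)) = ν.map φ := by
      rw [hJ i]; exact Measure.withDensity_rnDeriv_eq _ _ hac
    calc ∫⁻ x, g x * J (i + 1) x ∂μ
        = ∫⁻ x, g x ∂(μ.withDensity (J (i + 1))) := by
          rw [lintegral_withDensity_eq_lintegral_mul μ (hJm (i + 1)) hg]
          exact lintegral_congr fun x => (mul_comm _ _)
      _ = ∫⁻ x, g x ∂(ν.map φ) := by rw [h1]
      _ = ∫⁻ x, g (φ x) ∂ν := lintegral_map hg hφ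
      _ = ∫⁻ x, g (φ x) * (J i x * (‖u x‖₊ : ℝ≥0∞) ^ 2) ∂μ := by
          rw [show (fun x => g (φ x)) = g ∘ φ from rfl,
            lintegral_withDensity_eq_lintegral_mul μ (hw i) (hg.comp hφ)]
          exact lintegral_congr fun x => (mul_comm _ _)
  -- set version of the change of variables
  have COVset : ∀ (i : ℕ) (s : Set X), MeasurableSet s →
      ∫⁻ x in s, J (i + 1) x ∂μ
        = ∫⁻ x, (s.indicator (fun _ => (1 : ℝ≥0∞)) (φ x))
            * (J i x * (‖u x‖₊ : ℝ≥0∞) ^ 2) ∂μ := by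
    intro i s hs
    have hgm : Measurable (s.indicator (fun _ => (1 : ℝ≥0∞))) :=
      measurable_const.indicator hs
    rw [← COV i _ hgm, ← lintegral_indicator hs]
    refine lintegral_congr fun x => ?_
    by_cases hx : x ∈ s <;> simp [Set.indicator_apply, hx]
  -- measurability of T f
  have hTm : ∀ f : X → ℂ, Measurable f → Measurable (T f) := by
    rw [hT]; exact fun f hf => hu.mul (hf.comp hφ)
  -- squared L² norms of T f and T (T f)
  have KI1 : ∀ f : X → ℂ, Measurable f →
      ∫⁻ x, (‖T f x‖₊ : ℝ≥0∞) ^ 2 ∂μ = ∫⁻ x, (‖f x‖₊ : ℝ≥0∞) ^ 2 * J 1 x ∂μ := by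
    intro f hf
    have hgm : Measurable fun x => (‖f x‖₊ : ℝ≥0∞) ^ 2 :=
      (measurable_coe_nnreal_ennreal.comp hf.nnnorm).pow_const 2
    rw [show (1 : ℕ) = 0 + 1 from rfl, COV 0 _ hgm]
    refine lintegral_congr fun x => ?_
    rw [hJ0, hT]
    simp only [nnnorm_mul]
    push_cast
    ring
  have KI2 : ∀ f : X → ℂ, Measurable f →
      ∫⁻ x, (‖T (T f) x‖₊ : ℝ≥0∞) ^ 2 ∂μ = ∫⁻ x, (‖f x‖₊ : ℝ≥0∞) ^ 2 * J 2 x ∂μ := by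
    intro f hf
    have h1 := KI1 (T f) (hTm f hf)
    rw [h1]
    have hgm : Measurable fun x => (‖f x‖₊ : ℝ≥0∞) ^ 2 :=
      (measurable_coe_nnreal_ennreal.comp hf.nnnorm).pow_const 2
    rw [show (2 : ℕ) = 1 + 1 from rfl, COV 1 _ hgm]
    refine lintegral_congr fun x => ?_
    conv_lhs => rw [hT]
    simp only [nnnorm_mul]
    push_cast
    ring
  -- the base inequality, first on sets where everything is finite
  have hbase_set : ∀ s : Set X, MeasurableSet s → μ s < ∞ →
      (∫⁻ x in s, J 1 x ∂μ) < ∞ → (∫⁻ x in s, J 2 x ∂μ) < ∞ →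
      ∫⁻ x in s, (1 + J 2 x) ∂μ ≤ ∫⁻ x in s, 2 * J 1 x ∂μ := by
    intro s hs hμs h1 h2
    set f : X → ℂ := s.indicator fun _ => (1 : ℂ) with hfdef
    have hfm : Measurable f := measurable_const.indicator hs
    have hnsq : ∀ x, (‖f x‖₊ : ℝ≥0∞) ^ 2 = s.indicator (fun _ => (1 : ℝ≥0∞)) x := by
      intro x
      by_cases hx : x ∈ s <;> simp [hfdef, Set.indicator_apply, hx]
    have hA0 : ∫⁻ x, (‖f x‖₊ : ℝ≥0∞) ^ 2 ∂μ = μ s := by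
      simp_rw [hnsq]
      rw [lintegral_indicator hs]
      simp
    have hAi : ∀ i, ∫⁻ x, (‖f x‖₊ : ℝ≥0∞) ^ 2 * J i x ∂μ = ∫⁻ x in s, J i x ∂μ := by
      intro i
      have heq : ∀ x, (‖f x‖₊ : ℝ≥0∞) ^ 2 * J i x = s.indicator (J i) x := by
        intro x
        by_cases hx : x ∈ s <;> simp [hnsq, Set.indicator_apply, hx]
      simp_rw [heq]
      exact lintegral_indicator hs _
    have hm0 : MemLp f 2 μ := aux_mem2 hfm (by rw [hA0]; exact hμs)
    have hL1 : ∫⁻ x, (‖T f x‖₊ : ℝ≥0∞) ^ 2 ∂μ = ∫⁻ x in s, J 1 x ∂μ := by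
      rw [KI1 f hfm, hAi 1]
    have hL2 : ∫⁻ x, (‖T (T f) x‖₊ : ℝ≥0∞) ^ 2 ∂μ = ∫⁻ x in s, J 2 x ∂μ := by
      rw [KI2 f hfm, hAi 2]
    have hm1 : MemLp (T f) 2 μ := aux_mem2 (hTm f hfm) (by rw [hL1]; exact h1)
    have hm2 : MemLp (T (T f)) 2 μ := aux_mem2 (hTm _ (hTm f hfm)) (by rw [hL2]; exact h2)
    have hit2 : T^[2] f = T (T f) := by
      rw [show (2 : ℕ) = 1 + 1 from rfl, Function.iterate_succ', Function.comp_apply,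
        Function.iterate_one]
    have hmem : ∀ i ≤ 2, MemLp (T^[i] f) 2 μ := by
      intro i hi
      interval_cases i
      · simpa using hm0
      · simpa using hm1
      · rw [hit2]; exact hm2
    have hE := hexp f hfm hmem
    rw [aux_intsq hfm.aestronglyMeasurable, aux_intsq (hTm f hfm).aestronglyMeasurable,
      aux_intsq (hTm _ (hTm f hfm)).aestronglyMeasurable, hA0, hL1, hL2] at hE
    have hfin1 : ∫⁻ x in s, (1 + J 2 x) ∂μ ≠ ∞ := by
      rw [lintegral_add_left measurable_const, setLIntegral_one]
      exact ENNReal.add_ne_top.2 ⟨hμs.ne, h2.ne⟩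
    have hfin2 : ∫⁻ x in s, 2 * J 1 x ∂μ ≠ ∞ := by
      rw [lintegral_const_mul 2 (hJm 1)]
      exact ENNReal.mul_ne_top (by norm_num) h1.ne
    refine (ENNReal.toReal_le_toReal hfin1 hfin2).mp ?_
    rw [lintegral_add_left measurable_const, setLIntegral_one,
      lintegral_const_mul 2 (hJm 1), ENNReal.toReal_add hμs.ne h2.ne,
      ENNReal.toReal_mul, ENNReal.toReal_ofNat]
    linarith
  -- the base inequality, a.e.
  have hbase : ∀ᵐ x ∂μ, 1 + J 2 x ≤ 2 * J 1 x := by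
    have hres : ∀ N m : ℕ, ∀ᵐ x ∂μ,
        x ∈ spanningSets μ m ∩ {x | J 1 x ≤ (N : ℝ≥0∞)} ∩ {x | J 2 x ≤ (N : ℝ≥0∞)} →
        1 + J 2 x ≤ 2 * J 1 x := by
      intro N m
      set A := spanningSets μ m ∩ {x | J 1 x ≤ (N : ℝ≥0∞)} ∩ {x | J 2 x ≤ (N : ℝ≥0∞)} with hA
      have hAm : MeasurableSet A :=
        ((measurableSet_spanningSets μ m).inter
          (measurableSet_le (hJm 1) measurable_const)).inter
          (measurableSet_le (hJm 2) measurable_const)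
      rw [← ae_restrict_iff' hAm]
      refine ae_le_of_forall_setLIntegral_le_of_sigmaFinite (μ := μ.restrict A)
        (measurable_const.add (hJm 2)) ?_
      intro t ht _
      rw [Measure.restrict_restrict ht]
      have hsub : t ∩ A ⊆ spanningSets μ m := fun x hx => hx.2.1.1
      have hμ' : μ (t ∩ A) < ∞ :=
        lt_of_le_of_lt (measure_mono hsub) (measure_spanningSets_lt_top μ m)
      refine hbase_set (t ∩ A) (ht.inter hAm) hμ' ?_ ?_
      · calc ∫⁻ x in t ∩ A, J 1 x ∂μ
            ≤ ∫⁻ _x in t ∩ A, (N : ℝ≥0∞) ∂μ :=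
              setLIntegral_mono measurable_const fun x hx => hx.2.1.2
          _ = N * μ (t ∩ A) := setLIntegral_const _ _
          _ < ∞ := ENNReal.mul_lt_top (by simp) hμ'
      · calc ∫⁻ x in t ∩ A, J 2 x ∂μ
            ≤ ∫⁻ _x in t ∩ A, (N : ℝ≥0∞) ∂μ :=
              setLIntegral_mono measurable_const fun x hx => hx.2.2
          _ = N * μ (t ∩ A) := setLIntegral_const _ _
          _ < ∞ := ENNReal.mul_lt_top (by simp) hμ'
    have hall : ∀ᵐ x ∂μ, ∀ N m : ℕ,
        x ∈ spanningSets μ m ∩ {x | J 1 x ≤ (N : ℝ≥0∞)} ∩ {x | J 2 x ≤ (N : ℝ≥0∞)} →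
        1 + J 2 x ≤ 2 * J 1 x :=
      ae_all_iff.2 fun N => ae_all_iff.2 fun m => hres N m
    filter_upwards [hall, hfin 1, hfin 2] with x hx h1x h2x
    obtain ⟨N1, hN1⟩ := ENNReal.exists_nat_gt h1x.ne
    obtain ⟨N2, hN2⟩ := ENNReal.exists_nat_gt h2x.ne
    obtain ⟨m, hm⟩ : ∃ m, x ∈ spanningSets μ m := by
      have hx' : x ∈ ⋃ n, spanningSets μ n := by
        rw [iUnion_spanningSets]; trivial
      exact Set.mem_iUnion.mp hx'
    refine hx (max N1 N2) m ⟨⟨hm, ?_⟩, ?_⟩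
    · exact hN1.le.trans (by exact_mod_cast Nat.cast_le.mpr (le_max_left N1 N2))
    · exact hN2.le.trans (by exact_mod_cast Nat.cast_le.mpr (le_max_right N1 N2))
  -- concavity of the sequence (J k), a.e.
  have hconc : ∀ k : ℕ, ∀ᵐ x ∂μ, J k x + J (k + 2) x ≤ 2 * J (k + 1) x := by
    intro k
    induction k with
    | zero =>
      filter_upwards [hbase] with x hx
      rw [hJ0]
      exact hx
    | succ n ih =>
      refine ae_le_of_forall_setLIntegral_le_of_sigmaFinite
        ((hJm (n + 1)).add (hJm (n + 3))) ?_
      intro s hs _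
      have e1 := COVset n s hs
      have e2 : ∫⁻ x in s, J (n + 2) x ∂μ
          = ∫⁻ x, (s.indicator (fun _ => (1 : ℝ≥0∞)) (φ x))
              * (J (n + 1) x * (‖u x‖₊ : ℝ≥0∞) ^ 2) ∂μ := by
        have := COVset (n + 1) s hs
        rwa [show n + 1 + 1 = n + 2 by omega] at this
      have e3 : ∫⁻ x in s, J (n + 3) x ∂μ
          = ∫⁻ x, (s.indicator (fun _ => (1 : ℝ≥0∞)) (φ x))
              * (J (n + 2) x * (‖u x‖₊ : ℝ≥0∞) ^ 2) ∂μ := by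
        have := COVset (n + 2) s hs
        rwa [show n + 2 + 1 = n + 3 by omega] at this
      have hcm : Measurable fun x => s.indicator (fun _ => (1 : ℝ≥0∞)) (φ x) :=
        (measurable_const.indicator hs).comp hφ
      calc ∫⁻ x in s, (J (n + 1) x + J (n + 3) x) ∂μ
          = ∫⁻ x in s, J (n + 1) x ∂μ + ∫⁻ x in s, J (n + 3) x ∂μ :=
            lintegral_add_left (hJm (n + 1)) _
        _ = ∫⁻ x, (s.indicator (fun _ => (1 : ℝ≥0∞)) (φ x)) * (‖u x‖₊ : ℝ≥0∞) ^ 2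
              * (J n x + J (n + 2) x) ∂μ := by
            rw [e1, e3, ← lintegral_add_left (show Measurable fun x => s.indicator (fun _ => (1 : ℝ≥0∞)) (φ x) * (J n x * (‖u x‖₊ : ℝ≥0∞) ^ 2) from hcm.mul ((hJm n).mul hum))]
            exact lintegral_congr fun x => by ring
        _ ≤ ∫⁻ x, (s.indicator (fun _ => (1 : ℝ≥0∞)) (φ x)) * (‖u x‖₊ : ℝ≥0∞) ^ 2
              * (2 * J (n + 1) x) ∂μ := by
            refine lintegral_mono_ae ?_
            filter_upwards [ih] with x hx using mul_le_mul_right hx _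
        _ = ∫⁻ x in s, 2 * J (n + 2) x ∂μ := by
            rw [lintegral_const_mul 2 (hJm (n + 2)), e2,
              ← lintegral_const_mul 2 (show Measurable fun x => s.indicator (fun _ => (1 : ℝ≥0∞)) (φ x) * (J (n + 1) x * (‖u x‖₊ : ℝ≥0∞) ^ 2) from hcm.mul ((hJm (n + 1)).mul hum))]
            exact lintegral_congr fun x => by ring
  -- conclude pointwise via the concave sequence lemma
  intro k hk
  obtain ⟨m, rfl⟩ : ∃ m, k = m + 1 := ⟨k - 1, by omega⟩
  have hallfin : ∀ᵐ x ∂μ, ∀ i, J i x < ∞ := ae_all_iff.2 hfin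
  have hallconc : ∀ᵐ x ∂μ, ∀ k, J k x + J (k + 2) x ≤ 2 * J (k + 1) x := ae_all_iff.2 hconc
  filter_upwards [hallfin, hallconc] with x hfx hcx
  simp only [Nat.add_sub_cancel]
  set a : ℕ → ℝ := fun k => (J k x).toReal with ha
  have h0 : ∀ k, 0 ≤ a k := fun k => ENNReal.toReal_nonneg
  have hc : ∀ k, a k + a (k + 2) ≤ 2 * a (k + 1) := by
    intro k
    have h := hcx k
    have hr := ENNReal.toReal_mono (ENNReal.mul_ne_top (by norm_num) (hfx (k + 1)).ne) h
    rwa [ENNReal.toReal_add (hfx k).ne (hfx (k + 2)).ne, ENNReal.toReal_mul,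
      ENNReal.toReal_ofNat] at hr
  have hmono := aux_concave_seq_mono a h0 hc m
  exact (ENNReal.toReal_le_toReal (hfx m).ne (hfx (m + 1)).ne).mp hmono
end

section
/- Let u : X → ℂ be measurable on a σ-finite measure space and let M_u be the multiplication operator with dense domain D((M_u)ⁿ) ⊆ L²(μ). Then M_u is completely hyperexpansive (Σ_{i=0}^{n} (-1)^i C(n,i) ‖(M_u)^i f‖² ≤ 0 for all n ≥ 1 and f ∈ D((M_u)ⁿ)) if and only if for μ-a.e. x the sequence (|u(x)|^{2i})_{i≥0} is completely alternating, i.e. Σ_{i=0}^{n} (-1)^i C(n,i) |u(x)|^{2(m+i)} ≤ 0 for all m ≥ 0, n ≥ 1. -/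
open MeasureTheory Finset

private lemma aux_piece {X : Type*} [MeasurableSpace X] (μ : Measure X)
    (B : Set X) (C : ℕ → Set X) (hB : μ B ≠ 0) (h : B ⊆ ⋃ k, C k) :
    ∃ k, μ (B ∩ C k) ≠ 0 := by
  by_contra h'
  push_neg at h'
  apply hB
  have hBeq : B = ⋃ k, B ∩ C k := by
    rw [← Set.inter_iUnion]
    exact (Set.inter_eq_left.mpr h).symm
  rw [hBeq]
  exact measure_iUnion_null h'

/-- Corollary 2.14(ii): `M_u` is completely hyperexpansive iff for a.e. `x` the
sequence `(|u(x)|^{2i})_{i≥0}` is completely alternating. -/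
theorem stmt15
    {X : Type*} [MeasurableSpace X] (μ : Measure X) [SigmaFinite μ]
    (u : X → ℂ) (hu : Measurable u)
    (hdense : ∀ n : ℕ, Dense {f : Lp ℂ 2 μ |
        ∀ i ≤ n, MemLp (fun x => u x ^ i * (f : X → ℂ) x) 2 μ}) :
    (∀ n : ℕ, 1 ≤ n →
        ∀ f : X → ℂ, Measurable f →
          (∀ i ≤ n, MemLp (fun x => u x ^ i * f x) 2 μ) →
          ∑ i ∈ range (n + 1),
            (-1 : ℝ) ^ i * (n.choose i) * ∫ x, ‖u x ^ i * f x‖ ^ 2 ∂μ ≤ 0) ↔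
      ∀ᵐ x ∂μ, ∀ m n : ℕ, 1 ≤ n →
        ∑ i ∈ range (n + 1),
          (-1 : ℝ) ^ i * (n.choose i) * ‖u x‖ ^ (2 * (m + i)) ≤ 0 := by
  set S : ℕ → ℕ → X → ℝ := fun m n x =>
    ∑ i ∈ range (n + 1), (-1 : ℝ) ^ i * (n.choose i) * ‖u x‖ ^ (2 * (m + i)) with hS
  have hSmeas : ∀ m n, Measurable (S m n) := by
    intro m n
    exact Finset.measurable_sum _ fun i _ =>
      (measurable_const.mul ((hu.norm).pow_const _))
  constructor
  · -- forward direction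
    intro h
    rw [MeasureTheory.ae_all_iff]
    intro m
    rw [MeasureTheory.ae_all_iff]
    intro n
    rcases Nat.eq_zero_or_pos n with hn0 | hn
    · filter_upwards with x hn1; omega
    have : ∀ᵐ x ∂μ, S m n x ≤ 0 := by
      rw [MeasureTheory.ae_iff]
      by_contra hB
      simp only [not_le] at hB
      set B : Set X := {x | 0 < S m n x} with hBdef
      -- shrink to bounded |u|
      obtain ⟨k, hk⟩ := aux_piece μ B (fun k => {x | ‖u x‖ ≤ k}) hB (by
        intro x _
        obtain ⟨k, hk⟩ := exists_nat_ge (‖u x‖)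
        exact Set.mem_iUnion.mpr ⟨k, hk⟩)
      -- shrink to S ≥ ε
      obtain ⟨q, hq⟩ := aux_piece μ _ (fun q => {x | ((q : ℝ) + 1)⁻¹ ≤ S m n x}) hk (by
        intro x hx
        have hx' : 0 < S m n x := hx.1
        obtain ⟨q, hq⟩ := exists_nat_gt (S m n x)⁻¹
        refine Set.mem_iUnion.mpr ⟨q, ?_⟩
        have h1 : (S m n x)⁻¹ < (q : ℝ) + 1 := hq.trans (by linarith)
        have := (inv_lt_iff_one_lt_mul₀ (by positivity)).mp h1
        simp only [Set.mem_setOf_eq]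
        rw [inv_le_iff_one_le_mul₀ (by positivity)]
        nlinarith)
      -- shrink to a spanning set
      obtain ⟨j, hj⟩ := aux_piece μ _ (spanningSets μ) hq (by
        rw [iUnion_spanningSets]; exact Set.subset_univ _)
      set E : Set X := B ∩ {x | ‖u x‖ ≤ k} ∩ {x | ((q : ℝ) + 1)⁻¹ ≤ S m n x} ∩ spanningSets μ j
        with hEdef
      have hE : MeasurableSet E := by
        refine (((measurableSet_lt measurable_const (hSmeas m n)).inter ?_).inter ?_).inter
          (measurableSet_spanningSets μ j)
        · exact measurableSet_le hu.norm measurable_const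
        · exact measurableSet_le measurable_const (hSmeas m n)
      have hEfin : μ E < ⊤ :=
        lt_of_le_of_lt (measure_mono Set.inter_subset_right) (measure_spanningSets_lt_top μ j)
      have hEpos : μ E ≠ 0 := hj
      set ε : ℝ := ((q : ℝ) + 1)⁻¹ with hεdef
      have hεpos : 0 < ε := by positivity
      -- the test function
      set f : X → ℂ := fun x => u x ^ m * E.indicator (fun _ => (1 : ℂ)) x with hfdef
      have hf : Measurable f := (hu.pow_const m).mul (measurable_const.indicator hE)
      have hkey : ∀ i, (fun x => u x ^ i * f x) =
          E.indicator (fun x => u x ^ (m + i)) := by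
        intro i
        funext x
        by_cases hx : x ∈ E <;>
          simp [hfdef, Set.indicator, hx, pow_add, mul_comm]
      have hmem : ∀ i ≤ n, MemLp (fun x => u x ^ i * f x) 2 μ := by
        intro i _
        rw [hkey i]
        refine MemLp.of_le (memLp_indicator_const 2 hE (((k : ℝ) + 1) ^ (m + i))
          (Or.inr hEfin.ne)) ((hu.pow_const (m + i)).indicator hE).aestronglyMeasurable ?_
        filter_upwards with x
        by_cases hx : x ∈ E
        · simp only [Set.indicator, hx, if_pos]
          rw [norm_pow, Real.norm_eq_abs, abs_of_nonneg (by positivity)]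
          have hxk : ‖u x‖ ≤ (k : ℝ) := hx.1.1.2
          exact pow_le_pow_left₀ (norm_nonneg _) (by linarith) _
        · simp [Set.indicator, hx]
      have hle := h n hn f hf hmem
      -- rewrite each integral as a set integral
      have hnorm : ∀ i, (fun x => ‖u x ^ i * f x‖ ^ 2) =
          E.indicator (fun x => ‖u x‖ ^ (2 * (m + i))) := by
        intro i
        funext x
        by_cases hx : x ∈ E
        · simp only [hfdef, Set.indicator_of_mem hx, mul_one, ← pow_add, norm_pow]
          rw [← pow_mul]
          congr 1
          ring
        · simp [hfdef, Set.indicator_of_notMem hx]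
      have hint : ∀ i, ∫ x, ‖u x ^ i * f x‖ ^ 2 ∂μ =
          ∫ x in E, ‖u x‖ ^ (2 * (m + i)) ∂μ := by
        intro i
        rw [hnorm i, MeasureTheory.integral_indicator hE]
      have hIntOn : ∀ i, IntegrableOn (fun x => ‖u x‖ ^ (2 * (m + i))) E μ := by
        intro i
        refine Measure.integrableOn_of_bounded (M := ((k : ℝ) + 1) ^ (2 * (m + i))) hEfin.ne
          ((hu.norm.pow_const _).aestronglyMeasurable) ?_
        rw [MeasureTheory.ae_restrict_iff' hE]
        filter_upwards with x hx
        have hxk : ‖u x‖ ≤ (k : ℝ) := hx.1.1.2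
        rw [Real.norm_eq_abs, abs_of_nonneg (by positivity)]
        exact pow_le_pow_left₀ (norm_nonneg _) (by linarith) _
      have hsum : ∑ i ∈ range (n + 1),
          (-1 : ℝ) ^ i * (n.choose i) * ∫ x, ‖u x ^ i * f x‖ ^ 2 ∂μ =
          ∫ x in E, S m n x ∂μ := by
        simp_rw [hint]
        rw [hS]
        rw [MeasureTheory.integral_finset_sum]
        · exact Finset.sum_congr rfl fun i _ => (MeasureTheory.integral_const_mul _ _).symm
        · intro i _
          exact ((hIntOn i).const_mul _)
      rw [hsum] at hle
      -- but the set integral is positive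
      have hSIntOn : IntegrableOn (S m n) E μ :=
        MeasureTheory.integrable_finset_sum _ fun i _ => (hIntOn i).const_mul _
      have hlow : ∫ x in E, ε ∂μ ≤ ∫ x in E, S m n x ∂μ := by
        refine MeasureTheory.setIntegral_mono_on (integrableOn_const hEfin.ne)
          hSIntOn hE ?_
        intro x hx
        exact hx.1.2
      rw [MeasureTheory.setIntegral_const] at hlow
      have : (0 : ℝ) < μ.real E * ε := by
        apply mul_pos _ hεpos
        exact ENNReal.toReal_pos hEpos hEfin.ne
      rw [smul_eq_mul] at hlow
      linarith
    filter_upwards [this] with x hx _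
    exact hx
  · -- reverse direction
    intro h n hn f hf hmem
    have hInt : ∀ i ∈ range (n + 1), Integrable (fun x => ‖u x ^ i * f x‖ ^ 2) μ := by
      intro i hi
      have := (hmem i (by simpa using Nat.lt_succ_iff.mp (mem_range.mp hi))).integrable_norm_rpow
        (by norm_num) (by norm_num)
      simpa [ENNReal.toReal_ofNat, Real.rpow_natCast] using this
    have : ∑ i ∈ range (n + 1),
        (-1 : ℝ) ^ i * (n.choose i) * ∫ x, ‖u x ^ i * f x‖ ^ 2 ∂μ =
        ∫ x, ∑ i ∈ range (n + 1), (-1 : ℝ) ^ i * (n.choose i) * ‖u x ^ i * f x‖ ^ 2 ∂μ := by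
      rw [MeasureTheory.integral_finset_sum _ fun i hi => (hInt i hi).const_mul _]
      exact Finset.sum_congr rfl fun i _ => (MeasureTheory.integral_const_mul _ _).symm
    rw [this]
    apply MeasureTheory.integral_nonpos_of_ae
    filter_upwards [h] with x hx
    have h0 : ∀ i, ‖u x ^ i * f x‖ ^ 2 = ‖u x‖ ^ (2 * (0 + i)) * ‖f x‖ ^ 2 := by
      intro i
      rw [norm_mul, mul_pow, norm_pow, ← pow_mul, Nat.zero_add, mul_comm i 2]
    simp only [h0]
    have : ∑ i ∈ range (n + 1),
        (-1 : ℝ) ^ i * (n.choose i) * (‖u x‖ ^ (2 * (0 + i)) * ‖f x‖ ^ 2) =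
        (∑ i ∈ range (n + 1), (-1 : ℝ) ^ i * (n.choose i) * ‖u x‖ ^ (2 * (0 + i))) *
          ‖f x‖ ^ 2 := by
      rw [Finset.sum_mul]
      exact Finset.sum_congr rfl fun i _ => by ring
    rw [this]
    exact mul_nonpos_of_nonpos_of_nonneg (hx 0 n hn) (by positivity)
end

section
/- Let C_φ be a densely defined 2-expansive composition operator on L²(μ) (D((C_φ)²) dense) over a finite measure space (X, Σ, μ). Then C_φ is an isometry; equivalently, h_1 = d(μ∘φ⁻¹)/dμ = 1 μ-a.e., i.e. φ is measure-preserving. -/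
open MeasureTheory ENNReal

/-- Corollary 2.16(i): a densely defined 2-expansive composition operator `C_φ`
on a finite measure space is an isometry: `h₁ = d(μ∘φ⁻¹)/dμ = 1` a.e., i.e. `φ`
is measure-preserving. -/
theorem stmt18
    {X : Type*} [MeasurableSpace X] (μ : Measure X) [IsFiniteMeasure μ]
    (φ : X → X) (hφ : Measurable φ)
    (hns : (μ.map φ) ≪ μ)
    (hdense : Dense {f : Lp ℂ 2 μ |
        ∀ i ≤ 2, MemLp (fun x => (f : X → ℂ) (φ^[i] x)) 2 μ})
    (hexp : ∀ f : X → ℂ, Measurable f →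
      (∀ i ≤ 2, MemLp (fun x => f (φ^[i] x)) 2 μ) →
      (∫ x, ‖f x‖ ^ 2 ∂μ) - 2 * (∫ x, ‖f (φ x)‖ ^ 2 ∂μ)
        + (∫ x, ‖f (φ (φ x))‖ ^ 2 ∂μ) ≤ 0) :
    (∀ᵐ x ∂μ, (μ.map φ).rnDeriv μ x = 1) ∧ μ.map φ = μ := by
  -- Step A: the key concavity inequality for the sequence `n ↦ μ (φ^[n] ⁻¹' S)`
  have key : ∀ S : Set X, MeasurableSet S → ∀ n : ℕ,
      (μ (φ^[n] ⁻¹' S)).toReal - 2 * (μ (φ^[n+1] ⁻¹' S)).toReal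
        + (μ (φ^[n+2] ⁻¹' S)).toReal ≤ 0 := by
    intro S hS n
    set T := φ^[n] ⁻¹' S with hT
    have hTm : MeasurableSet T := hS.preimage (hφ.iterate n)
    set f : X → ℂ := T.indicator fun _ => (1 : ℂ) with hfdef
    have hf : Measurable f := measurable_const.indicator hTm
    have hcomp : ∀ i : ℕ, (fun x => f (φ^[i] x))
        = (φ^[n+i] ⁻¹' S).indicator fun _ => (1 : ℂ) := by
      intro i; funext x
      have hmem : φ^[i] x ∈ T ↔ x ∈ φ^[n+i] ⁻¹' S := by
        simp [hT, Set.mem_preimage, Function.iterate_add_apply]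
      by_cases h : x ∈ φ^[n+i] ⁻¹' S <;>
        simp [hfdef, Set.indicator_apply, hmem, h]
    have hmem2 : ∀ i ≤ 2, MemLp (fun x => f (φ^[i] x)) 2 μ := by
      intro i _
      rw [hcomp i]
      exact memLp_indicator_const 2 (hS.preimage (hφ.iterate (n+i))) 1
        (Or.inr (measure_ne_top μ _))
    have hint : ∀ i : ℕ, (∫ x, ‖f (φ^[i] x)‖ ^ 2 ∂μ)
        = (μ (φ^[n+i] ⁻¹' S)).toReal := by
      intro i
      have hfx : ∀ x, f (φ^[i] x) = ((φ^[n+i] ⁻¹' S).indicator fun _ => (1 : ℂ)) x :=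
        fun x => congrFun (hcomp i) x
      simp_rw [hfx]
      have hpt : ∀ x, ‖((φ^[n+i] ⁻¹' S).indicator fun _ => (1 : ℂ)) x‖ ^ 2
          = (φ^[n+i] ⁻¹' S).indicator (fun _ => (1 : ℝ)) x := by
        intro x
        by_cases h : x ∈ φ^[n+i] ⁻¹' S <;> simp [Set.indicator_apply, h]
      simp_rw [hpt]
      rw [integral_indicator_const _ (hS.preimage (hφ.iterate (n+i)))]
      simp [measureReal_def]
    have h0 : (∫ x, ‖f x‖ ^ 2 ∂μ) = (μ (φ^[n+0] ⁻¹' S)).toReal := hint 0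
    have h1 : (∫ x, ‖f (φ x)‖ ^ 2 ∂μ) = (μ (φ^[n+1] ⁻¹' S)).toReal := by
      have := hint 1
      simpa using this
    have h2 : (∫ x, ‖f (φ (φ x))‖ ^ 2 ∂μ) = (μ (φ^[n+2] ⁻¹' S)).toReal := by
      have := hint 2
      simpa [Function.iterate_succ_apply, Function.iterate_succ_apply'] using this
    have := hexp f hf hmem2
    rw [h0, h1, h2] at this
    simpa using this
  -- Step B: the measure of preimages is nondecreasing
  have mono : ∀ S : Set X, MeasurableSet S → μ S ≤ μ (φ ⁻¹' S) := by
    intro S hS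
    set I : ℕ → ℝ := fun n => (μ (φ^[n] ⁻¹' S)).toReal with hI
    have hconc : ∀ n, I (n+2) - I (n+1) ≤ I (n+1) - I n := by
      intro n
      have := key S hS n
      simp only [hI] at *
      linarith
    have hd : ∀ n, I (n+1) - I n ≤ I 1 - I 0 := by
      intro n
      induction n with
      | zero => exact le_rfl
      | succ k ih => exact le_trans (hconc k) ih
    have hI0 : I 0 = (μ S).toReal := by simp [hI]
    have hI1 : I 1 = (μ (φ ⁻¹' S)).toReal := by simp [hI]
    by_contra hlt
    push_neg at hlt
    have hfin1 : μ (φ ⁻¹' S) ≠ ∞ := measure_ne_top μ _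
    have hfin0 : μ S ≠ ∞ := measure_ne_top μ _
    have hlt' : I 1 < I 0 := by
      rw [hI0, hI1]
      exact ENNReal.toReal_lt_toReal hfin1 hfin0 |>.mpr hlt
    set d : ℝ := I 0 - I 1 with hdd
    have hdpos : 0 < d := by simp [hdd]; linarith
    have hchain : ∀ n, I n ≤ I 0 - n * d := by
      intro n
      induction n with
      | zero => simp
      | succ k ih =>
        have := hd k
        have : I (k+1) ≤ I k - d := by simp [hdd] at this ⊢; linarith
        calc I (k+1) ≤ I k - d := this
          _ ≤ I 0 - k * d - d := by linarith [ih]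
          _ = I 0 - (k+1 : ℕ) * d := by push_cast; ring
    obtain ⟨n, hn⟩ := exists_nat_gt (I 0 / d)
    have hnd : I 0 < n * d := by
      rw [div_lt_iff₀ hdpos] at hn
      linarith
    have := hchain n
    have hnneg : (0:ℝ) ≤ I n := ENNReal.toReal_nonneg
    linarith
  -- Step C: equality of measures
  have heq : ∀ S : Set X, MeasurableSet S → μ (φ ⁻¹' S) = μ S := by
    intro S hS
    have h1 := mono S hS
    have h2 := mono Sᶜ hS.compl
    have e1 : μ (φ ⁻¹' S) + μ (φ ⁻¹' Sᶜ) = μ Set.univ := by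
      rw [Set.preimage_compl]
      exact measure_add_measure_compl (hS.preimage hφ)
    have e2 : μ S + μ Sᶜ = μ Set.univ := measure_add_measure_compl hS
    have hsum : μ (φ ⁻¹' S) + μ (φ ⁻¹' Sᶜ) = μ S + μ Sᶜ := e1.trans e2.symm
    have hle : μ (φ ⁻¹' S) + μ Sᶜ ≤ μ S + μ Sᶜ := by
      calc μ (φ ⁻¹' S) + μ Sᶜ ≤ μ (φ ⁻¹' S) + μ (φ ⁻¹' Sᶜ) := by gcongr
        _ = μ S + μ Sᶜ := hsum
    have : μ (φ ⁻¹' S) ≤ μ S :=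
      (ENNReal.add_le_add_iff_right (measure_ne_top μ Sᶜ)).mp hle
    exact le_antisymm this h1
  have hmap : μ.map φ = μ := by
    ext s hs
    rw [Measure.map_apply hφ hs, heq s hs]
  refine ⟨?_, hmap⟩
  rw [hmap]
  filter_upwards [μ.rnDeriv_self] with x hx
  simpa using hx
end
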